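/- arXiv:1901.05404 — 7 statements merged into one kernel-verified Lean document; each statement's English description precedes it below -/
import Mathlib

section
/- If either (q > p and b > a) or (q < p and b < a), then there exists λ with 0 < λ < π²/(a+b)² and D(λ) = 0. -/
set_option maxHeartbeats 1000000


/-- Corollary A.3.  For
`D(λ) = q cos(√λ b) sin(√λ a) + p cos(√λ a) sin(√λ b)`, if either
(`q > p` and `b > a`) or (`q < p` and `b < a`), then `D` has a zero in
`(0, π²/(a+b)²)`. -/
theorem lowest_eigenvalue_strict_bound (p q a b : ℝ)
    (hp : 0 < p) (hq : 0 < q) (ha : 0 < a) (hb : 0 < b)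
    (hcase : (p < q ∧ a < b) ∨ (q < p ∧ b < a)) :
    ∃ lam : ℝ, 0 < lam ∧ lam < Real.pi ^ 2 / (a + b) ^ 2 ∧
      q * Real.cos (Real.sqrt lam * b) * Real.sin (Real.sqrt lam * a) +
        p * Real.cos (Real.sqrt lam * a) * Real.sin (Real.sqrt lam * b) = 0 := by
  have hπ := Real.pi_pos
  have hs0 : (0:ℝ) < a + b := by linarith
  set s : ℝ := a + b with hs
  set L : ℝ := Real.pi ^ 2 / s ^ 2 with hL
  have hL0 : 0 < L := by positivity
  set f : ℝ → ℝ := fun lam =>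
    q * Real.cos (Real.sqrt lam * b) * Real.sin (Real.sqrt lam * a) +
      p * Real.cos (Real.sqrt lam * a) * Real.sin (Real.sqrt lam * b) with hf
  have hcont : ContinuousOn f (Set.Icc (L / 4) L) := by fun_prop
  have hsqL : Real.sqrt L = Real.pi / s := by
    have : L = (Real.pi / s) ^ 2 := by rw [hL]; ring
    rw [this, Real.sqrt_sq (by positivity)]
  have hsqL4 : Real.sqrt (L / 4) = Real.pi / (2 * s) := by
    have : L / 4 = (Real.pi / (2 * s)) ^ 2 := by rw [hL]; ring
    rw [this, Real.sqrt_sq (by positivity)]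
  -- f (L/4) > 0
  have hA4 : 0 < Real.pi / (2 * s) * a ∧ Real.pi / (2 * s) * a < Real.pi / 2 := by
    constructor
    · positivity
    · rw [div_mul_eq_mul_div, div_lt_div_iff₀ (by positivity) (by positivity)]
      nlinarith
  have hB4 : 0 < Real.pi / (2 * s) * b ∧ Real.pi / (2 * s) * b < Real.pi / 2 := by
    constructor
    · positivity
    · rw [div_mul_eq_mul_div, div_lt_div_iff₀ (by positivity) (by positivity)]
      nlinarith
  have hfpos : 0 < f (L / 4) := by
    have hca : 0 < Real.cos (Real.pi / (2 * s) * a) :=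
      Real.cos_pos_of_mem_Ioo ⟨by linarith [hA4.1], hA4.2⟩
    have hcb : 0 < Real.cos (Real.pi / (2 * s) * b) :=
      Real.cos_pos_of_mem_Ioo ⟨by linarith [hB4.1], hB4.2⟩
    have hsa : 0 < Real.sin (Real.pi / (2 * s) * a) :=
      Real.sin_pos_of_pos_of_lt_pi hA4.1 (by linarith [hA4.2])
    have hsb : 0 < Real.sin (Real.pi / (2 * s) * b) :=
      Real.sin_pos_of_pos_of_lt_pi hB4.1 (by linarith [hB4.2])
    simp only [hf, hsqL4]
    positivity
  -- f L < 0
  have hAB : Real.pi / s * b = Real.pi - Real.pi / s * a := by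
    field_simp
    ring
  have hfneg : f L < 0 := by
    have hsa : 0 < Real.sin (Real.pi / s * a) := by
      apply Real.sin_pos_of_pos_of_lt_pi (by positivity)
      rw [div_mul_eq_mul_div, div_lt_iff₀ (by positivity)]
      nlinarith
    have hfL : f L = (p - q) * (Real.cos (Real.pi / s * a) * Real.sin (Real.pi / s * a)) := by
      simp only [hf, hsqL, hAB, Real.cos_pi_sub, Real.sin_pi_sub]
      ring
    rw [hfL]
    rcases hcase with ⟨hpq, hab⟩ | ⟨hpq, hab⟩
    · have hca : 0 < Real.cos (Real.pi / s * a) := by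
        apply Real.cos_pos_of_mem_Ioo
        constructor
        · have : (0:ℝ) < Real.pi / s * a := by positivity
          linarith
        · rw [div_mul_eq_mul_div, div_lt_div_iff₀ (by positivity) (by positivity)]
          nlinarith
      exact mul_neg_of_neg_of_pos (by linarith) (mul_pos hca hsa)
    · have hca : Real.cos (Real.pi / s * a) < 0 := by
        apply Real.cos_neg_of_pi_div_two_lt_of_lt
        · rw [div_mul_eq_mul_div, div_lt_div_iff₀ (by positivity) (by positivity)]
          nlinarith
        · have : Real.pi / s * a < Real.pi := by
            rw [div_mul_eq_mul_div, div_lt_iff₀ (by positivity)]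
            nlinarith
          linarith
      exact mul_neg_of_pos_of_neg (by linarith) (mul_neg_of_neg_of_pos hca hsa)
  -- IVT
  have hsub := intermediate_value_Ioo' (le_of_lt (by linarith : L / 4 < L)) hcont
  have h0 : (0:ℝ) ∈ Set.Ioo (f L) (f (L / 4)) := ⟨hfneg, hfpos⟩
  obtain ⟨lam, hlam, hflam⟩ := hsub h0
  exact ⟨lam, by linarith [hlam.1], hlam.2, hflam⟩
end

section
/- Let β ∈ ℕ with β ≥ 2 and let ℓ : ℕ → ℝ with ℓ n > 0 for all n. For n ∈ ℕ put P_n = (Σ_{k=0}^n β^{2k} ℓ_k)·(Σ_{k=n}^∞ β^{−2k} ℓ_k), with tail sums and products taken in [0,∞]. Then: (a) lim_{n→∞} P_n = 0 if and only if ℓ_n → 0 as n → ∞; (b) sup_{n ∈ ℕ} P_n < ∞ if and only if sup_{n ∈ ℕ} ℓ_n < ∞. -/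
open Filter Topology
open scoped ENNReal

namespace ExpAntitreeAux

lemma pow_mul_inv_pow {c : ℝ≥0∞} (hc0 : c ≠ 0) (hctop : c ≠ ∞) (n : ℕ) :
    c ^ n * c⁻¹ ^ n = 1 := by
  rw [← mul_pow, ENNReal.mul_inv_cancel hc0 hctop, one_pow]

lemma geom_sum_le {c : ℝ≥0∞} (hc0 : c ≠ 0) (hctop : c ≠ ∞) (n : ℕ) :
    ∑ k ∈ Finset.range (n + 1), c ^ k ≤ c ^ n * (1 - c⁻¹)⁻¹ := by
  have h1 : ∑ k ∈ Finset.range (n + 1), c ^ k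
      = ∑ j ∈ Finset.range (n + 1), c ^ (n - j) := by
    rw [← Finset.sum_range_reflect (fun k => c ^ k) (n + 1)]
    simp
  have h2 : ∀ j ∈ Finset.range (n + 1), c ^ (n - j) = c ^ n * c⁻¹ ^ j := by
    intro j hj
    have hj' : j ≤ n := Nat.lt_succ_iff.mp (Finset.mem_range.mp hj)
    have hn : c ^ n = c ^ (n - j) * c ^ j := by
      rw [← pow_add, Nat.sub_add_cancel hj']
    rw [hn, mul_assoc, pow_mul_inv_pow hc0 hctop, mul_one]
  rw [h1, Finset.sum_congr rfl h2, ← Finset.mul_sum]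
  refine mul_le_mul_right ?_ _
  rw [← ENNReal.tsum_geometric c⁻¹]
  exact ENNReal.sum_le_tsum _

lemma tail_geom {c : ℝ≥0∞} (n : ℕ) :
    ∑' k : ℕ, c⁻¹ ^ (n + k) = c⁻¹ ^ n * (1 - c⁻¹)⁻¹ := by
  simp only [pow_add]
  rw [ENNReal.tsum_mul_left, ENNReal.tsum_geometric]

/-- Upper bound: if `L` is bounded by `M` everywhere and by `M'` on `[n, ∞)`. -/
lemma upper_bound {c : ℝ≥0∞} (hc0 : c ≠ 0) (hctop : c ≠ ∞)
    (L : ℕ → ℝ≥0∞) (M M' : ℝ≥0∞) (n : ℕ)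
    (hM : ∀ k, L k ≤ M) (hM' : ∀ k, L (n + k) ≤ M') :
    (∑ k ∈ Finset.range (n + 1), c ^ k * L k) * ∑' k : ℕ, L (n + k) * c⁻¹ ^ (n + k)
      ≤ M * (1 - c⁻¹)⁻¹ * ((1 - c⁻¹)⁻¹ * M') := by
  have hA : (∑ k ∈ Finset.range (n + 1), c ^ k * L k)
      ≤ c ^ n * (1 - c⁻¹)⁻¹ * M := by
    calc (∑ k ∈ Finset.range (n + 1), c ^ k * L k)
        ≤ ∑ k ∈ Finset.range (n + 1), c ^ k * M :=
          Finset.sum_le_sum fun k _ => mul_le_mul_right (hM k) _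
      _ = (∑ k ∈ Finset.range (n + 1), c ^ k) * M := by rw [Finset.sum_mul]
      _ ≤ c ^ n * (1 - c⁻¹)⁻¹ * M := mul_le_mul_left (geom_sum_le hc0 hctop n) _
  have hT : (∑' k : ℕ, L (n + k) * c⁻¹ ^ (n + k))
      ≤ M' * (c⁻¹ ^ n * (1 - c⁻¹)⁻¹) := by
    calc (∑' k : ℕ, L (n + k) * c⁻¹ ^ (n + k))
        ≤ ∑' k : ℕ, M' * c⁻¹ ^ (n + k) :=
          ENNReal.tsum_le_tsum fun k => mul_le_mul_left (hM' k) _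
      _ = M' * ∑' k : ℕ, c⁻¹ ^ (n + k) := ENNReal.tsum_mul_left
      _ = M' * (c⁻¹ ^ n * (1 - c⁻¹)⁻¹) := by rw [tail_geom]
  calc (∑ k ∈ Finset.range (n + 1), c ^ k * L k) *
        ∑' k : ℕ, L (n + k) * c⁻¹ ^ (n + k)
      ≤ (c ^ n * (1 - c⁻¹)⁻¹ * M) * (M' * (c⁻¹ ^ n * (1 - c⁻¹)⁻¹)) :=
        mul_le_mul' hA hT
    _ = (c ^ n * c⁻¹ ^ n) * (M * (1 - c⁻¹)⁻¹ * ((1 - c⁻¹)⁻¹ * M')) := by ring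
    _ = M * (1 - c⁻¹)⁻¹ * ((1 - c⁻¹)⁻¹ * M') := by
        rw [pow_mul_inv_pow hc0 hctop, one_mul]

lemma lower_bound {c : ℝ≥0∞} (hc0 : c ≠ 0) (hctop : c ≠ ∞)
    (L : ℕ → ℝ≥0∞) (n : ℕ) :
    L n * L n ≤
      (∑ k ∈ Finset.range (n + 1), c ^ k * L k) * ∑' k : ℕ, L (n + k) * c⁻¹ ^ (n + k) := by
  have hA : c ^ n * L n ≤ ∑ k ∈ Finset.range (n + 1), c ^ k * L k :=
    Finset.single_le_sum (f := fun k => c ^ k * L k) (fun k _ => zero_le)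
      (Finset.self_mem_range_succ n)
  have hT : L n * c⁻¹ ^ n ≤ ∑' k : ℕ, L (n + k) * c⁻¹ ^ (n + k) := by
    have := ENNReal.le_tsum (f := fun k : ℕ => L (n + k) * c⁻¹ ^ (n + k)) 0
    simpa using this
  calc L n * L n = (c ^ n * c⁻¹ ^ n) * (L n * L n) := by
        rw [pow_mul_inv_pow hc0 hctop, one_mul]
    _ = (c ^ n * L n) * (L n * c⁻¹ ^ n) := by ring
    _ ≤ _ := mul_le_mul' hA hT

end ExpAntitreeAux

open ExpAntitreeAux

/-- Proposition 10.1(iii) and (v), exponentially growing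
antitrees `sₙ = βⁿ`.  With
`Pₙ = (Σ_{k ≤ n} β^{2k} ℓₖ)(Σ_{k ≥ n} β^{−2k} ℓₖ)` (in `[0,∞]`):
(a) `Pₙ → 0` iff `ℓₙ → 0`;  (b) `sup_n Pₙ < ∞` iff `sup_n ℓₙ < ∞`. -/
theorem exponential_antitree_criteria (β : ℕ) (hβ : 2 ≤ β)
    (ℓ : ℕ → ℝ) (hℓ : ∀ n, 0 < ℓ n) :
    (Tendsto
      (fun n : ℕ =>
        (∑ k ∈ Finset.range (n + 1), ENNReal.ofReal ((β : ℝ) ^ (2 * k) * ℓ k)) *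
          ∑' k : ℕ, ENNReal.ofReal (ℓ (n + k) / (β : ℝ) ^ (2 * (n + k))))
      atTop (𝓝 0) ↔ Tendsto ℓ atTop (𝓝 0)) ∧
    ((⨆ n : ℕ,
        (∑ k ∈ Finset.range (n + 1), ENNReal.ofReal ((β : ℝ) ^ (2 * k) * ℓ k)) *
          ∑' k : ℕ, ENNReal.ofReal (ℓ (n + k) / (β : ℝ) ^ (2 * (n + k)))) < ∞ ↔
      BddAbove (Set.range ℓ)) := by
  have hβR : (2 : ℝ) ≤ (β : ℝ) := by exact_mod_cast hβ
  have hβpos : (0 : ℝ) < (β : ℝ) := by linarith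
  set c : ℝ≥0∞ := ((β : ℝ≥0∞)) ^ 2 with hc_def
  set L : ℕ → ℝ≥0∞ := fun n => ENNReal.ofReal (ℓ n) with hL_def
  have hβne : (β : ℝ≥0∞) ≠ 0 := by
    simp only [ne_eq, Nat.cast_eq_zero]; omega
  have hc0 : c ≠ 0 := pow_ne_zero 2 hβne
  have hctop : c ≠ ∞ := by
    simp [hc_def]
  have hc1 : 1 < c := by
    have h2 : (2 : ℝ≥0∞) ≤ (β : ℝ≥0∞) := by exact_mod_cast hβ
    calc (1 : ℝ≥0∞) < 2 ^ 2 := by norm_num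
      _ ≤ (β : ℝ≥0∞) ^ 2 := pow_le_pow_left' h2 2
  have hD0 : (1 : ℝ≥0∞) - c⁻¹ ≠ 0 := by
    rw [ne_eq, tsub_eq_zero_iff_le, not_le]
    exact ENNReal.inv_lt_one.mpr hc1
  have hDtop : ((1 : ℝ≥0∞) - c⁻¹)⁻¹ ≠ ∞ := ENNReal.inv_ne_top.mpr hD0
  set D : ℝ≥0∞ := ((1 : ℝ≥0∞) - c⁻¹)⁻¹ with hD_def
  -- rewrite the terms
  have hterm1 : ∀ k : ℕ, ENNReal.ofReal ((β : ℝ) ^ (2 * k) * ℓ k) = c ^ k * L k := by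
    intro k
    rw [ENNReal.ofReal_mul (by positivity)]
    congr 1
    rw [ENNReal.ofReal_pow (by positivity), ENNReal.ofReal_natCast, hc_def, ← pow_mul]
  have hterm2 : ∀ m : ℕ, ENNReal.ofReal (ℓ m / (β : ℝ) ^ (2 * m)) = L m * c⁻¹ ^ m := by
    intro m
    rw [div_eq_mul_inv, ENNReal.ofReal_mul (le_of_lt (hℓ m)),
      ENNReal.ofReal_inv_of_pos (by positivity),
      ENNReal.ofReal_pow (by positivity), ENNReal.ofReal_natCast, hc_def,
      ENNReal.inv_pow, ENNReal.inv_pow, ← pow_mul]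
  have hP : ∀ n : ℕ,
      (∑ k ∈ Finset.range (n + 1), ENNReal.ofReal ((β : ℝ) ^ (2 * k) * ℓ k)) *
          ∑' k : ℕ, ENNReal.ofReal (ℓ (n + k) / (β : ℝ) ^ (2 * (n + k)))
        = (∑ k ∈ Finset.range (n + 1), c ^ k * L k) *
            ∑' k : ℕ, L (n + k) * c⁻¹ ^ (n + k) := by
    intro n
    congr 1
    · exact Finset.sum_congr rfl fun k _ => hterm1 k
    · exact tsum_congr fun k => hterm2 (n + k)
  have hLpos : ∀ n, L n ≠ 0 := fun n => by
    simp [hL_def, ENNReal.ofReal_eq_zero, not_le, hℓ n]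
  have hLtop : ∀ n, L n ≠ ∞ := fun n => ENNReal.ofReal_ne_top
  -- lower bound in final form
  have hlow : ∀ n : ℕ, L n * L n ≤
      (∑ k ∈ Finset.range (n + 1), ENNReal.ofReal ((β : ℝ) ^ (2 * k) * ℓ k)) *
        ∑' k : ℕ, ENNReal.ofReal (ℓ (n + k) / (β : ℝ) ^ (2 * (n + k))) := by
    intro n
    rw [hP n]
    exact lower_bound hc0 hctop L n
  constructor
  · -- part (a)
    constructor
    · -- P → 0 ⇒ ℓ → 0
      intro hPto
      have hLto : Tendsto L atTop (𝓝 0) := by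
        rw [ENNReal.tendsto_nhds_zero]
        intro ε hε
        have hεε : (0 : ℝ≥0∞) < ε * ε := ENNReal.mul_pos (ne_of_gt hε) (ne_of_gt hε)
        have := hPto.eventually (gt_mem_nhds hεε)
        filter_upwards [this] with n hn
        by_contra hcon
        push_neg at hcon
        have : ε * ε ≤ L n * L n := mul_le_mul' hcon.le hcon.le
        exact absurd (lt_of_le_of_lt (le_trans this (hlow n)) hn) (lt_irrefl _)
      have : Tendsto (fun n => (L n).toReal) atTop (𝓝 (0 : ℝ≥0∞).toReal) :=
        (ENNReal.tendsto_toReal (by simp)).comp hLto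
      simp only [ENNReal.toReal_zero] at this
      refine this.congr fun n => ?_
      simp [hL_def, ENNReal.toReal_ofReal (hℓ n).le]
    · -- ℓ → 0 ⇒ P → 0
      intro hlto
      have hLto : Tendsto L atTop (𝓝 0) := by
        have := ENNReal.tendsto_ofReal (a := (0 : ℝ)) hlto
        simpa [hL_def] using this
      have hbdd : BddAbove (Set.range ℓ) := hlto.bddAbove_range
      obtain ⟨M, hM⟩ := hbdd
      have hMle : ∀ k, L k ≤ ENNReal.ofReal M := fun k =>
        ENNReal.ofReal_le_ofReal (hM (Set.mem_range_self k))
      set E : ℝ≥0∞ := ENNReal.ofReal M * D * D with hE_def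
      have hEtop : E ≠ ∞ :=
        ENNReal.mul_ne_top (ENNReal.mul_ne_top ENNReal.ofReal_ne_top hDtop) hDtop
      rw [ENNReal.tendsto_nhds_zero]
      intro ε hε
      set δ : ℝ≥0∞ := ε / (E + 1) with hδ_def
      have hδ0 : 0 < δ := by
        apply ENNReal.div_pos (ne_of_gt hε)
        exact ENNReal.add_ne_top.mpr ⟨hEtop, by simp⟩
      have hEδ : E * δ ≤ ε := by
        calc E * δ ≤ (E + 1) * δ := mul_le_mul_left (le_add_right le_rfl) _
          _ = (E + 1) * (ε / (E + 1)) := rfl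
          _ ≤ ε := ENNReal.mul_div_le
      have hev : ∀ᶠ k in atTop, L k ≤ δ :=
        (ENNReal.tendsto_nhds_zero.mp hLto) δ hδ0
      obtain ⟨N, hN⟩ := eventually_atTop.mp hev
      rw [eventually_atTop]
      refine ⟨N, fun n hn => ?_⟩
      rw [hP n]
      calc (∑ k ∈ Finset.range (n + 1), c ^ k * L k) *
            ∑' k : ℕ, L (n + k) * c⁻¹ ^ (n + k)
          ≤ ENNReal.ofReal M * D * (D * δ) :=
            upper_bound hc0 hctop L _ _ n hMle
              (fun k => hN (n + k) (le_trans hn (Nat.le_add_right n k)))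
        _ = E * δ := by rw [hE_def]; ring
        _ ≤ ε := hEδ
  · -- part (b)
    constructor
    · -- sup P < ∞ ⇒ bdd
      intro hsup
      set S := (⨆ n : ℕ,
        (∑ k ∈ Finset.range (n + 1), ENNReal.ofReal ((β : ℝ) ^ (2 * k) * ℓ k)) *
          ∑' k : ℕ, ENNReal.ofReal (ℓ (n + k) / (β : ℝ) ^ (2 * (n + k)))) with hS_def
      have hSne : S ≠ ∞ := ne_of_lt hsup
      have hLS : ∀ n, ℓ n * ℓ n ≤ S.toReal := by
        intro n
        have h1 : L n * L n ≤ S := by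
          refine le_trans (hlow n) ?_
          rw [hS_def]
          exact le_iSup (fun n : ℕ =>
            (∑ k ∈ Finset.range (n + 1), ENNReal.ofReal ((β : ℝ) ^ (2 * k) * ℓ k)) *
              ∑' k : ℕ, ENNReal.ofReal (ℓ (n + k) / (β : ℝ) ^ (2 * (n + k)))) n
        have h2 : ENNReal.ofReal (ℓ n * ℓ n) ≤ S := by
          rw [ENNReal.ofReal_mul (hℓ n).le]
          exact h1
        exact (ENNReal.ofReal_le_iff_le_toReal hSne).mp h2
      refine ⟨max 1 S.toReal, ?_⟩
      rintro x ⟨n, rfl⟩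
      rcases le_or_gt (ℓ n) 1 with h | h
      · exact le_trans h (le_max_left _ _)
      · refine le_trans ?_ (le_max_right _ _)
        nlinarith [hLS n, hℓ n]
    · -- bdd ⇒ sup P < ∞
      rintro ⟨M, hM⟩
      have hMle : ∀ k, L k ≤ ENNReal.ofReal M := fun k =>
        ENNReal.ofReal_le_ofReal (hM (Set.mem_range_self k))
      have hbound : ∀ n, (∑ k ∈ Finset.range (n + 1),
            ENNReal.ofReal ((β : ℝ) ^ (2 * k) * ℓ k)) *
          ∑' k : ℕ, ENNReal.ofReal (ℓ (n + k) / (β : ℝ) ^ (2 * (n + k)))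
            ≤ ENNReal.ofReal M * D * (D * ENNReal.ofReal M) := by
        intro n
        rw [hP n]
        exact upper_bound hc0 hctop L _ _ n hMle (fun k => hMle (n + k))
      calc (⨆ n : ℕ, (∑ k ∈ Finset.range (n + 1),
              ENNReal.ofReal ((β : ℝ) ^ (2 * k) * ℓ k)) *
            ∑' k : ℕ, ENNReal.ofReal (ℓ (n + k) / (β : ℝ) ^ (2 * (n + k))))
          ≤ ENNReal.ofReal M * D * (D * ENNReal.ofReal M) := iSup_le hbound
        _ < ∞ := Ne.lt_top (ENNReal.mul_ne_top
            (ENNReal.mul_ne_top ENNReal.ofReal_ne_top hDtop)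
            (ENNReal.mul_ne_top hDtop ENNReal.ofReal_ne_top))
end

section
/- Let β ∈ ℕ with β ≥ 2 and let ℓ : ℕ → ℝ with ℓ n > 0 for all n. If Σ_{n=0}^∞ β^{2n} ℓ_n² < ∞, then Σ_{n=0}^∞ β^{−2n} ℓ_n Σ_{k=0}^{n−1} β^{2k} ℓ_k < ∞. -/
/-- core of Proposition 10.1(iv).  For `β ≥ 2`:
`Σ β^{2n} ℓₙ² < ∞` implies `Σₙ β^{−2n} ℓₙ Σ_{k<n} β^{2k} ℓₖ < ∞`. -/
theorem exponential_antitree_trace_class (β : ℕ) (hβ : 2 ≤ β)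
    (ℓ : ℕ → ℝ) (hℓ : ∀ n, 0 < ℓ n)
    (h : Summable fun n : ℕ => (β : ℝ) ^ (2 * n) * ℓ n ^ 2) :
    Summable fun n : ℕ =>
      ℓ n / (β : ℝ) ^ (2 * n) * ∑ k ∈ Finset.range n, (β : ℝ) ^ (2 * k) * ℓ k := by
  set q : ℝ := (β : ℝ) with hqdef
  have hq2 : (2 : ℝ) ≤ q := by rw [hqdef]; exact_mod_cast hβ
  have hq1 : (1 : ℝ) ≤ q := le_trans one_le_two hq2
  have hq0 : (0 : ℝ) < q := lt_of_lt_of_le one_pos hq1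
  set S : ℝ := ∑' n : ℕ, q ^ (2 * n) * ℓ n ^ 2 with hSdef
  have hterm_nonneg : ∀ n, 0 ≤ q ^ (2 * n) * ℓ n ^ 2 := fun n =>
    mul_nonneg (pow_nonneg hq0.le _) (sq_nonneg _)
  have hS0 : 0 ≤ S := tsum_nonneg hterm_nonneg
  -- each a_k := q^k * ℓ k is bounded by √S
  have hbound : ∀ k, q ^ k * ℓ k ≤ Real.sqrt S := by
    intro k
    have h1 : (q ^ k * ℓ k) ^ 2 = q ^ (2 * k) * ℓ k ^ 2 := by
      rw [mul_pow, ← pow_mul, mul_comm k 2]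
    have h2 : q ^ (2 * k) * ℓ k ^ 2 ≤ S := Summable.le_tsum h k fun j _ => hterm_nonneg j
    have h3 : (q ^ k * ℓ k) ^ 2 ≤ S := h1 ▸ h2
    have h4 : 0 ≤ q ^ k * ℓ k := mul_nonneg (pow_nonneg hq0.le _) (hℓ k).le
    exact (Real.le_sqrt h4 hS0).mpr h3
  -- geometric sum bound
  have hgeom : ∀ n, ∑ k ∈ Finset.range n, q ^ k ≤ q ^ n := by
    intro n
    induction n with
    | zero => simp
    | succ n ih =>
      rw [Finset.sum_range_succ, pow_succ]
      have : q ^ n * 2 ≤ q ^ n * q := by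
        apply mul_le_mul_of_nonneg_left hq2 (pow_nonneg hq0.le _)
      nlinarith [pow_nonneg hq0.le n]
  -- inner sum bound
  have hinner : ∀ n, ∑ k ∈ Finset.range n, q ^ (2 * k) * ℓ k ≤ Real.sqrt S * q ^ n := by
    intro n
    calc ∑ k ∈ Finset.range n, q ^ (2 * k) * ℓ k
        = ∑ k ∈ Finset.range n, q ^ k * (q ^ k * ℓ k) := by
          apply Finset.sum_congr rfl
          intro k _
          rw [← mul_assoc, ← pow_add, two_mul]
      _ ≤ ∑ k ∈ Finset.range n, q ^ k * Real.sqrt S := by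
          apply Finset.sum_le_sum
          intro k _
          exact mul_le_mul_of_nonneg_left (hbound k) (pow_nonneg hq0.le _)
      _ = (∑ k ∈ Finset.range n, q ^ k) * Real.sqrt S := by
          rw [← Finset.sum_mul]
      _ ≤ q ^ n * Real.sqrt S := by
          apply mul_le_mul_of_nonneg_right (hgeom n) (Real.sqrt_nonneg _)
      _ = Real.sqrt S * q ^ n := mul_comm _ _
  -- comparison with geometric series
  have hsum : Summable fun n : ℕ => S * ((q ^ 2)⁻¹) ^ n := by
    apply Summable.mul_left
    apply summable_geometric_of_lt_one (by positivity)
    rw [inv_lt_one_iff₀]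
    right
    nlinarith
  apply Summable.of_nonneg_of_le _ _ hsum
  · intro n
    apply mul_nonneg (div_nonneg (hℓ n).le (pow_nonneg hq0.le _))
    apply Finset.sum_nonneg
    intro k _
    exact mul_nonneg (pow_nonneg hq0.le _) (hℓ k).le
  · intro n
    have hℓn : ℓ n ≤ Real.sqrt S / q ^ n := by
      rw [le_div_iff₀ (pow_pos hq0 n)]
      rw [mul_comm]
      exact hbound n
    have hinn := hinner n
    have hpos2n : (0:ℝ) < q ^ (2*n) := pow_pos hq0 _
    have hsumpos : 0 ≤ ∑ k ∈ Finset.range n, q ^ (2 * k) * ℓ k :=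
      Finset.sum_nonneg fun k _ => mul_nonneg (pow_nonneg hq0.le _) (hℓ k).le
    calc ℓ n / q ^ (2 * n) * ∑ k ∈ Finset.range n, q ^ (2 * k) * ℓ k
        ≤ (Real.sqrt S / q ^ n) / q ^ (2 * n) * (Real.sqrt S * q ^ n) := by
          apply mul_le_mul
          · exact div_le_div_of_nonneg_right hℓn hpos2n.le
          · exact hinn
          · exact hsumpos
          · positivity
      _ = Real.sqrt S * Real.sqrt S * (q ^ n / q ^ n) / q ^ (2 * n) := by
          ring
      _ = S / q ^ (2 * n) := by
          rw [div_self (pow_pos hq0 n).ne', Real.mul_self_sqrt hS0, mul_one]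
      _ = S * ((q ^ 2)⁻¹) ^ n := by
          rw [← inv_pow, ← pow_mul, inv_pow, div_eq_mul_inv]
end

section
/- Let q ∈ ℕ with q ≥ 1 and let ℓ : ℕ → ℝ with ℓ n > 0 for all n. If (n+1)·ℓ_n → 0 as n → ∞, then lim_{n→∞} (Σ_{k=0}^n (k+1)^q (k+2)^q ℓ_k)·(Σ_{k=n}^∞ ℓ_k/((k+1)^q (k+2)^q)) = 0, with tail sums and products taken in [0,∞]. -/
open Filter Topology
open scoped ENNReal

/-- sufficiency part of Proposition 10.2(iii), polynomially
growing antitrees `sₙ = (n+1)^q`.  If `(n+1)·ℓₙ → 0`, then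
`(Σ_{k ≤ n} (k+1)^q (k+2)^q ℓₖ)(Σ_{k ≥ n} ℓₖ/((k+1)^q (k+2)^q)) → 0` in `[0,∞]`. -/
theorem polynomial_antitree_discreteness (q : ℕ) (hq : 1 ≤ q)
    (ℓ : ℕ → ℝ) (hℓ : ∀ n, 0 < ℓ n)
    (h : Tendsto (fun n : ℕ => ((n : ℝ) + 1) * ℓ n) atTop (𝓝 0)) :
    Tendsto
      (fun n : ℕ =>
        (∑ k ∈ Finset.range (n + 1),
            ENNReal.ofReal (((k : ℝ) + 1) ^ q * ((k : ℝ) + 2) ^ q * ℓ k)) *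
          ∑' k : ℕ,
            ENNReal.ofReal (ℓ (n + k) /
              (((n : ℝ) + (k : ℝ) + 1) ^ q * ((n : ℝ) + (k : ℝ) + 2) ^ q)))
      atTop (𝓝 0) := by
  obtain ⟨p, rfl⟩ : ∃ p, q = p + 1 := ⟨q - 1, by omega⟩
  clear hq
  -- global bound `M` on `(k+1) * ℓ k`
  obtain ⟨M, hM⟩ := h.bddAbove_range
  rw [mem_upperBounds] at hM
  have hM' : ∀ k : ℕ, ((k : ℝ) + 1) * ℓ k ≤ M := fun k => hM _ ⟨k, rfl⟩
  have hM0 : 0 < M := lt_of_lt_of_le (by have := hℓ 0; nlinarith) (hM' 0)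
  rw [ENNReal.tendsto_nhds_zero]
  intro ε hε
  obtain ⟨δ, hδ0, hδε⟩ : ∃ δ : ℝ, 0 < δ ∧ ENNReal.ofReal δ ≤ ε := by
    rcases eq_or_ne ε ⊤ with rfl | hε'
    · exact ⟨1, one_pos, le_top⟩
    · exact ⟨ε.toReal, ENNReal.toReal_pos hε.ne' hε',
        le_of_eq (ENNReal.ofReal_toReal hε')⟩
  set εr : ℝ := δ / (M * 2 ^ (2 * p + 2)) with hεrdef
  have hεr0 : 0 < εr := by positivity
  obtain ⟨N, hN⟩ := (Filter.eventually_atTop).mp (h.eventually (eventually_lt_nhds hεr0))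
  filter_upwards [eventually_ge_atTop N] with n hn
  have hn1 : (0 : ℝ) < (n : ℝ) + 1 := by positivity
  -- bound on the partial sum
  have hS : (∑ k ∈ Finset.range (n + 1),
      ENNReal.ofReal (((k : ℝ) + 1) ^ (p + 1) * ((k : ℝ) + 2) ^ (p + 1) * ℓ k))
      ≤ ENNReal.ofReal (M * ((n : ℝ) + 2) ^ (2 * p + 2)) := by
    rw [← ENNReal.ofReal_sum_of_nonneg (fun k _ => by have := hℓ k; positivity)]
    apply ENNReal.ofReal_le_ofReal
    have hterm : ∀ k ∈ Finset.range (n + 1),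
        ((k : ℝ) + 1) ^ (p + 1) * ((k : ℝ) + 2) ^ (p + 1) * ℓ k
          ≤ M * ((n : ℝ) + 2) ^ (2 * p + 1) := by
      intro k hk
      have hk' : (k : ℝ) ≤ n := by
        exact_mod_cast Nat.lt_succ_iff.mp (Finset.mem_range.mp hk)
      have h1 : ((k : ℝ) + 1) ^ (p + 1) * ((k : ℝ) + 2) ^ (p + 1) * ℓ k
          = (((k : ℝ) + 1) * ℓ k) * (((k : ℝ) + 1) ^ p * ((k : ℝ) + 2) ^ (p + 1)) := by
        ring
      rw [h1]
      have h2 : ((k : ℝ) + 1) ^ p * ((k : ℝ) + 2) ^ (p + 1)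
          ≤ ((n : ℝ) + 2) ^ (2 * p + 1) := by
        calc ((k : ℝ) + 1) ^ p * ((k : ℝ) + 2) ^ (p + 1)
            ≤ ((n : ℝ) + 2) ^ p * ((n : ℝ) + 2) ^ (p + 1) := by
              gcongr <;> first | positivity | linarith
          _ = ((n : ℝ) + 2) ^ (2 * p + 1) := by rw [← pow_add]; ring_nf
      have h3 := hM' k
      have hpos : 0 ≤ ((k : ℝ) + 1) * ℓ k := by have := hℓ k; positivity
      exact mul_le_mul h3 h2 (by positivity) hM0.le
    calc ∑ k ∈ Finset.range (n + 1),
          ((k : ℝ) + 1) ^ (p + 1) * ((k : ℝ) + 2) ^ (p + 1) * ℓ k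
        ≤ (Finset.range (n + 1)).card • (M * ((n : ℝ) + 2) ^ (2 * p + 1)) :=
          Finset.sum_le_card_nsmul _ _ _ hterm
      _ = ((n : ℝ) + 1) * (M * ((n : ℝ) + 2) ^ (2 * p + 1)) := by
          rw [Finset.card_range, nsmul_eq_mul]; push_cast; ring
      _ ≤ ((n : ℝ) + 2) * (M * ((n : ℝ) + 2) ^ (2 * p + 1)) := by
          have : (0 : ℝ) ≤ M * ((n : ℝ) + 2) ^ (2 * p + 1) := by positivity
          nlinarith
      _ = M * ((n : ℝ) + 2) ^ (2 * p + 2) := by rw [pow_succ]; ring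
  -- bound on the tail sum
  have hT : (∑' k : ℕ, ENNReal.ofReal (ℓ (n + k) /
      (((n : ℝ) + (k : ℝ) + 1) ^ (p + 1) * ((n : ℝ) + (k : ℝ) + 2) ^ (p + 1))))
      ≤ ENNReal.ofReal (εr / ((n : ℝ) + 1) ^ (2 * p + 2)) := by
    rw [ENNReal.tsum_eq_iSup_sum]
    apply iSup_le
    intro F
    obtain ⟨m, hm⟩ := F.exists_nat_subset_range
    rw [← ENNReal.ofReal_sum_of_nonneg (fun k _ => by
      have := hℓ (n + k); positivity)]
    apply ENNReal.ofReal_le_ofReal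
    -- per-term bound
    have hterm : ∀ k : ℕ, ℓ (n + k) /
        (((n : ℝ) + (k : ℝ) + 1) ^ (p + 1) * ((n : ℝ) + (k : ℝ) + 2) ^ (p + 1))
        ≤ (εr / ((n : ℝ) + 1) ^ (2 * p + 1)) *
          (((n : ℝ) + (k : ℝ) + 1)⁻¹ - ((n : ℝ) + (k : ℝ) + 2)⁻¹) := by
      intro k
      set a : ℝ := (n : ℝ) + (k : ℝ) + 1 with ha
      set b : ℝ := (n : ℝ) + (k : ℝ) + 2 with hb
      have ha0 : (0 : ℝ) < a := by positivity
      have hb0 : (0 : ℝ) < b := by positivity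
      have hk0 : (0 : ℝ) ≤ (k : ℝ) := Nat.cast_nonneg k
      have hma : (n : ℝ) + 1 ≤ a := by rw [ha]; linarith
      have hmb : (n : ℝ) + 1 ≤ b := by rw [hb]; linarith
      have hℓa : ℓ (n + k) * a ≤ εr := by
        have := (hN (n + k) (le_trans hn (Nat.le_add_right n k))).le
        calc ℓ (n + k) * a = ((↑(n + k) : ℝ) + 1) * ℓ (n + k) := by
              push_cast [ha]; ring
          _ ≤ εr := this
      have ha0' : ((n : ℝ) + (k : ℝ) + 1) ≠ 0 := by positivity
      have hb0' : ((n : ℝ) + (k : ℝ) + 2) ≠ 0 := by positivity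
      have hinv : a⁻¹ - b⁻¹ = 1 / (a * b) := by
        rw [ha, hb]; field_simp; ring
      rw [hinv, div_mul_div_comm, mul_one,
        div_le_div_iff₀ (by positivity) (by positivity)]
      have hcb : ((n : ℝ) + 1) ^ (2 * p + 1) * b ≤ a ^ (p + 1) * b ^ (p + 1) := by
        have hc : ((n : ℝ) + 1) ^ (2 * p + 1) ≤ a ^ (p + 1) * b ^ p := by
          calc ((n : ℝ) + 1) ^ (2 * p + 1)
              = ((n : ℝ) + 1) ^ (p + 1) * ((n : ℝ) + 1) ^ p := by
                rw [← pow_add]; ring_nf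
            _ ≤ a ^ (p + 1) * b ^ p := by
                gcongr <;> first | positivity | exact hma | exact hmb
        calc ((n : ℝ) + 1) ^ (2 * p + 1) * b ≤ (a ^ (p + 1) * b ^ p) * b := by
              exact mul_le_mul_of_nonneg_right hc hb0.le
          _ = a ^ (p + 1) * b ^ (p + 1) := by rw [pow_succ]; ring
      calc ℓ (n + k) * (((n : ℝ) + 1) ^ (2 * p + 1) * (a * b))
          = (ℓ (n + k) * a) * (((n : ℝ) + 1) ^ (2 * p + 1) * b) := by ring
        _ ≤ εr * (((n : ℝ) + 1) ^ (2 * p + 1) * b) :=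
            mul_le_mul_of_nonneg_right hℓa (by positivity)
        _ ≤ εr * (a ^ (p + 1) * b ^ (p + 1)) :=
            mul_le_mul_of_nonneg_left hcb hεr0.le
    -- telescoping
    have hg0 : ∀ k : ℕ, (0 : ℝ) ≤ (εr / ((n : ℝ) + 1) ^ (2 * p + 1)) *
        (((n : ℝ) + (k : ℝ) + 1)⁻¹ - ((n : ℝ) + (k : ℝ) + 2)⁻¹) := by
      intro k
      have h1 : ((n : ℝ) + (k : ℝ) + 2)⁻¹ ≤ ((n : ℝ) + (k : ℝ) + 1)⁻¹ := by
        apply inv_anti₀ (by positivity) (by linarith)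
      have h2 : (0 : ℝ) ≤ εr / ((n : ℝ) + 1) ^ (2 * p + 1) := by positivity
      nlinarith
    have htel : ∑ k ∈ Finset.range m,
        (((n : ℝ) + (k : ℝ) + 1)⁻¹ - ((n : ℝ) + (k : ℝ) + 2)⁻¹) ≤ ((n : ℝ) + 1)⁻¹ := by
      have heq : ∀ k ∈ Finset.range m,
          ((n : ℝ) + (k : ℝ) + 1)⁻¹ - ((n : ℝ) + (k : ℝ) + 2)⁻¹
            = (fun j : ℕ => ((n : ℝ) + (j : ℝ) + 1)⁻¹) k
              - (fun j : ℕ => ((n : ℝ) + (j : ℝ) + 1)⁻¹) (k + 1) := by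
        intro k _
        push_cast
        ring_nf
      rw [Finset.sum_congr rfl heq, Finset.sum_range_sub']
      have hpos : (0 : ℝ) ≤ ((n : ℝ) + (m : ℝ) + 1)⁻¹ := by positivity
      push_cast
      simp only [add_zero]
      linarith
    calc ∑ k ∈ F, ℓ (n + k) /
          (((n : ℝ) + (k : ℝ) + 1) ^ (p + 1) * ((n : ℝ) + (k : ℝ) + 2) ^ (p + 1))
        ≤ ∑ k ∈ F, (εr / ((n : ℝ) + 1) ^ (2 * p + 1)) *
          (((n : ℝ) + (k : ℝ) + 1)⁻¹ - ((n : ℝ) + (k : ℝ) + 2)⁻¹) :=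
          Finset.sum_le_sum fun k _ => hterm k
      _ ≤ ∑ k ∈ Finset.range m, (εr / ((n : ℝ) + 1) ^ (2 * p + 1)) *
          (((n : ℝ) + (k : ℝ) + 1)⁻¹ - ((n : ℝ) + (k : ℝ) + 2)⁻¹) :=
          Finset.sum_le_sum_of_subset_of_nonneg hm fun k _ _ => hg0 k
      _ = (εr / ((n : ℝ) + 1) ^ (2 * p + 1)) * ∑ k ∈ Finset.range m,
          (((n : ℝ) + (k : ℝ) + 1)⁻¹ - ((n : ℝ) + (k : ℝ) + 2)⁻¹) := by
          rw [Finset.mul_sum]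
      _ ≤ (εr / ((n : ℝ) + 1) ^ (2 * p + 1)) * ((n : ℝ) + 1)⁻¹ := by
          apply mul_le_mul_of_nonneg_left htel (by positivity)
      _ = εr / ((n : ℝ) + 1) ^ (2 * p + 2) := by
          rw [← div_eq_mul_inv, div_div, ← pow_succ]
  -- combine
  calc (∑ k ∈ Finset.range (n + 1),
        ENNReal.ofReal (((k : ℝ) + 1) ^ (p + 1) * ((k : ℝ) + 2) ^ (p + 1) * ℓ k)) *
        ∑' k : ℕ, ENNReal.ofReal (ℓ (n + k) /
          (((n : ℝ) + (k : ℝ) + 1) ^ (p + 1) * ((n : ℝ) + (k : ℝ) + 2) ^ (p + 1)))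
      ≤ ENNReal.ofReal (M * ((n : ℝ) + 2) ^ (2 * p + 2)) *
        ENNReal.ofReal (εr / ((n : ℝ) + 1) ^ (2 * p + 2)) := mul_le_mul' hS hT
    _ = ENNReal.ofReal ((M * ((n : ℝ) + 2) ^ (2 * p + 2)) *
        (εr / ((n : ℝ) + 1) ^ (2 * p + 2))) :=
          (ENNReal.ofReal_mul (by positivity)).symm
    _ ≤ ENNReal.ofReal δ := by
        apply ENNReal.ofReal_le_ofReal
        have key : ((n : ℝ) + 2) ^ (2 * p + 2)
            ≤ 2 ^ (2 * p + 2) * ((n : ℝ) + 1) ^ (2 * p + 2) := by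
          calc ((n : ℝ) + 2) ^ (2 * p + 2) ≤ (2 * ((n : ℝ) + 1)) ^ (2 * p + 2) := by
                gcongr <;> first | positivity | linarith
            _ = 2 ^ (2 * p + 2) * ((n : ℝ) + 1) ^ (2 * p + 2) := by rw [mul_pow]
        have h1 : (M * ((n : ℝ) + 2) ^ (2 * p + 2)) * (εr / ((n : ℝ) + 1) ^ (2 * p + 2))
            = δ * (((n : ℝ) + 2) ^ (2 * p + 2) /
              (2 ^ (2 * p + 2) * ((n : ℝ) + 1) ^ (2 * p + 2))) := by
          rw [hεrdef]; field_simp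
        rw [h1]
        calc δ * (((n : ℝ) + 2) ^ (2 * p + 2) /
              (2 ^ (2 * p + 2) * ((n : ℝ) + 1) ^ (2 * p + 2)))
            ≤ δ * 1 := by
              apply mul_le_mul_of_nonneg_left _ hδ0.le
              rw [div_le_one (by positivity)]
              exact key
          _ = δ := mul_one δ
    _ ≤ ε := hδε
end

section
/- Let q ∈ ℕ with q ≥ 1 and let ℓ : ℕ → ℝ with ℓ n > 0 for all n. If Σ_{n=0}^∞ (n+1)^{2q} ℓ_n² < ∞, then Σ_{n=0}^∞ (ℓ_n/((n+1)^q (n+2)^q))·Σ_{k=0}^{n−1} (k+1)^q (k+2)^q ℓ_k < ∞. -/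
/-- core of Proposition 10.2(iv).  For `sₙ = (n+1)^q`:
`Σ (n+1)^{2q} ℓₙ² < ∞` implies
`Σₙ (ℓₙ/((n+1)^q(n+2)^q)) Σ_{k<n} (k+1)^q (k+2)^q ℓₖ < ∞`. -/
theorem polynomial_antitree_trace_class (q : ℕ) (hq : 1 ≤ q)
    (ℓ : ℕ → ℝ) (hℓ : ∀ n, 0 < ℓ n)
    (h : Summable fun n : ℕ => ((n : ℝ) + 1) ^ (2 * q) * ℓ n ^ 2) :
    Summable fun n : ℕ =>
      ℓ n / (((n : ℝ) + 1) ^ q * ((n : ℝ) + 2) ^ q) *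
        ∑ k ∈ Finset.range n, ((k : ℝ) + 1) ^ q * ((k : ℝ) + 2) ^ q * ℓ k := by
  set A := ∑' n : ℕ, ((n : ℝ) + 1) ^ (2 * q) * ℓ n ^ 2 with hAdef
  have hA0 : 0 ≤ A := tsum_nonneg fun n => by positivity
  have hgsum : Summable (fun n : ℕ =>
      2 ^ q * Real.sqrt A * (ℓ n * Real.sqrt ((n : ℝ) + 1) / ((n : ℝ) + 1) ^ q)) := by
    apply Summable.mul_left
    have h2 : Summable (fun n : ℕ => 1 / ((n : ℝ) + 1) ^ (4 * q - 1)) := by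
      have := (summable_nat_add_iff (f := fun n : ℕ => 1 / (n : ℝ) ^ (4 * q - 1)) 1).mpr
        (Real.summable_one_div_nat_pow.mpr (by omega))
      simpa [Nat.cast_add] using this
    refine Summable.of_nonneg_of_le
      (fun n => by have := (hℓ n).le; positivity) (fun n => ?_)
      (((h.add h2).mul_left (1 / 2)))
    set x : ℝ := (n : ℝ) + 1 with hx
    have hx0 : (0 : ℝ) < x := by positivity
    have hs : Real.sqrt x ^ 2 = x := Real.sq_sqrt hx0.le
    have hs0 : 0 ≤ Real.sqrt x := Real.sqrt_nonneg x
    have e1 : x ^ (2 * q) = (x ^ q) ^ 2 := by rw [mul_comm, pow_mul]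
    have e2 : x ^ (4 * q - 1) * x = (x ^ q) ^ 4 := by
      rw [← pow_succ, ← pow_mul]; congr 1; omega
    have hq0 : (0 : ℝ) < x ^ q := by positivity
    have hq1 : x ^ (4 * q - 1) ≠ 0 := by positivity
    have eL : ℓ n * Real.sqrt x / x ^ q = (x ^ q * ℓ n) * (Real.sqrt x / (x ^ q) ^ 2) := by
      field_simp
    have eb : (Real.sqrt x / (x ^ q) ^ 2) ^ 2 = 1 / x ^ (4 * q - 1) := by
      rw [div_pow, hs, div_eq_div_iff (by positivity) hq1]
      linear_combination e2
    show ℓ n * Real.sqrt x / x ^ q ≤ 1 / 2 * (x ^ (2 * q) * ℓ n ^ 2 + 1 / x ^ (4 * q - 1))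
    rw [eL, e1, ← eb]
    have hb0 : 0 ≤ Real.sqrt x / (x ^ q) ^ 2 := by positivity
    nlinarith [sq_nonneg (x ^ q * ℓ n - Real.sqrt x / (x ^ q) ^ 2)]
  refine Summable.of_nonneg_of_le (fun n => ?_) (fun n => ?_) hgsum
  · have h1 := (hℓ n).le
    have h2 : 0 ≤ ∑ k ∈ Finset.range n, ((k : ℝ) + 1) ^ q * ((k : ℝ) + 2) ^ q * ℓ k :=
      Finset.sum_nonneg fun k _ => by have := (hℓ k).le; positivity
    positivity
  · set x : ℝ := (n : ℝ) + 1 with hx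
    have hx0 : (0 : ℝ) < x := by positivity
    have hn0 : (0 : ℝ) ≤ (n : ℝ) := Nat.cast_nonneg n
    have hx1 : (1 : ℝ) ≤ x := by rw [hx]; linarith
    have step1 : ∑ k ∈ Finset.range n, ((k : ℝ) + 1) ^ q * ((k : ℝ) + 2) ^ q * ℓ k
        ≤ 2 ^ q * ∑ k ∈ Finset.range n, ((k : ℝ) + 1) ^ (2 * q) * ℓ k := by
      rw [Finset.mul_sum]
      refine Finset.sum_le_sum fun k _ => ?_
      have hk0 : (0 : ℝ) < (k : ℝ) + 1 := by positivity
      have h22 : ((k : ℝ) + 2) ^ q ≤ 2 ^ q * ((k : ℝ) + 1) ^ q := by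
        rw [← mul_pow]
        exact pow_le_pow_left₀ (by positivity) (by linarith) q
      have hkey : ((k : ℝ) + 1) ^ q * ((k : ℝ) + 2) ^ q ≤ 2 ^ q * ((k : ℝ) + 1) ^ (2 * q) := by
        rw [two_mul, pow_add]
        nlinarith [pow_pos hk0 q, h22]
      nlinarith [hℓ k, hkey]
    have hTnn : 0 ≤ ∑ k ∈ Finset.range n, ((k : ℝ) + 1) ^ (2 * q) * ℓ k :=
      Finset.sum_nonneg fun k _ => by have := (hℓ k).le; positivity
    have step2 : ∑ k ∈ Finset.range n, ((k : ℝ) + 1) ^ (2 * q) * ℓ k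
        ≤ Real.sqrt A * (x ^ q * Real.sqrt x) := by
      have hcs := Finset.sum_mul_sq_le_sq_mul_sq (Finset.range n)
        (fun k => ((k : ℝ) + 1) ^ q * ℓ k) (fun k => ((k : ℝ) + 1) ^ q)
      have hsum1 : ∑ k ∈ Finset.range n, (((k : ℝ) + 1) ^ q * ℓ k) ^ 2 ≤ A := by
        refine le_trans (le_of_eq ?_) (Summable.sum_le_tsum (Finset.range n) (fun k _ => by positivity) h)
        refine Finset.sum_congr rfl fun k _ => ?_
        rw [mul_pow, ← pow_mul, mul_comm q 2]
      have hsum2 : ∑ k ∈ Finset.range n, (((k : ℝ) + 1) ^ q) ^ 2 ≤ x ^ (2 * q) * x := by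
        calc ∑ k ∈ Finset.range n, (((k : ℝ) + 1) ^ q) ^ 2
            ≤ ∑ _k ∈ Finset.range n, x ^ (2 * q) := by
              refine Finset.sum_le_sum fun k hk => ?_
              rw [← pow_mul, mul_comm q 2]
              refine pow_le_pow_left₀ (by positivity) ?_ _
              have hkn : (k : ℝ) ≤ (n : ℝ) :=
                Nat.cast_le.mpr (Finset.mem_range.mp hk).le
              rw [hx]; linarith
          _ = n * x ^ (2 * q) := by rw [Finset.sum_const, Finset.card_range]; ring
          _ ≤ x ^ (2 * q) * x := by
              have hnx : (n : ℝ) ≤ x := by rw [hx]; linarith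
              nlinarith [pow_pos hx0 (2 * q)]
      have hB : (∑ k ∈ Finset.range n, ((k : ℝ) + 1) ^ (2 * q) * ℓ k) ^ 2
          ≤ A * (x ^ (2 * q) * x) := by
        have heq : ∑ k ∈ Finset.range n, ((k : ℝ) + 1) ^ (2 * q) * ℓ k
            = ∑ k ∈ Finset.range n, (((k : ℝ) + 1) ^ q * ℓ k) * ((k : ℝ) + 1) ^ q := by
          refine Finset.sum_congr rfl fun k _ => ?_
          rw [two_mul, pow_add]; ring
        rw [heq]
        refine hcs.trans ?_
        have hnn : 0 ≤ ∑ k ∈ Finset.range n, (((k : ℝ) + 1) ^ q) ^ 2 :=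
          Finset.sum_nonneg fun k _ => by positivity
        have hnn2 : 0 ≤ ∑ k ∈ Finset.range n, (((k : ℝ) + 1) ^ q * ℓ k) ^ 2 :=
          Finset.sum_nonneg fun k _ => by positivity
        exact mul_le_mul hsum1 hsum2 hnn hA0
      have hle := (Real.le_sqrt hTnn (by positivity)).mpr hB
      refine hle.trans (le_of_eq ?_)
      rw [Real.sqrt_mul hA0, Real.sqrt_mul (by positivity), mul_comm 2 q, pow_mul,
        Real.sqrt_sq (by positivity)]
    have hsA : 0 ≤ Real.sqrt A := Real.sqrt_nonneg A
    have hsx : 0 ≤ Real.sqrt x := Real.sqrt_nonneg x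
    have hden : (0:ℝ) < x ^ q * ((n : ℝ) + 2) ^ q := by positivity
    have hS : ∑ k ∈ Finset.range n, ((k : ℝ) + 1) ^ q * ((k : ℝ) + 2) ^ q * ℓ k
        ≤ 2 ^ q * (Real.sqrt A * (x ^ q * Real.sqrt x)) := by
      refine step1.trans ?_
      exact mul_le_mul_of_nonneg_left step2 (by positivity)
    have hx2 : x ^ q ≤ ((n : ℝ) + 2) ^ q :=
      pow_le_pow_left₀ hx0.le (by rw [hx]; linarith) q
    calc ℓ n / (x ^ q * ((n : ℝ) + 2) ^ q) *
          ∑ k ∈ Finset.range n, ((k : ℝ) + 1) ^ q * ((k : ℝ) + 2) ^ q * ℓ k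
        ≤ ℓ n / (x ^ q * ((n : ℝ) + 2) ^ q) *
          (2 ^ q * (Real.sqrt A * (x ^ q * Real.sqrt x))) :=
          mul_le_mul_of_nonneg_left hS (by have := (hℓ n).le; positivity)
      _ = 2 ^ q * Real.sqrt A * (ℓ n * Real.sqrt x / ((n : ℝ) + 2) ^ q) := by
          field_simp
      _ ≤ 2 ^ q * Real.sqrt A * (ℓ n * Real.sqrt x / x ^ q) := by
          refine mul_le_mul_of_nonneg_left ?_ (by positivity)
          have hsxp : 0 < Real.sqrt x := Real.sqrt_pos.mpr hx0
          exact (div_le_div_iff_of_pos_left (by have := hℓ n; positivity) (by positivity)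
            (by positivity)).mpr hx2
end

section
/- Let q ∈ ℕ with q ≥ 1 and let s be a real number with 0 ≤ s ≤ 2q+1. With ℓ_k = (k+1)^{−s}, the limit lim_{n→∞} (Σ_{k=0}^n (k+1)^q (k+2)^q (k+1)^{−s})·(Σ_{k=n}^∞ (k+1)^{−s}/((k+1)^q (k+2)^q)) (tail sums and products taken in [0,∞]) equals 0 if and only if s > 1. -/
open Filter Topology
open scoped ENNReal


private lemma combine_rpow {x : ℝ} (hx : 0 < x) (q : ℕ) (s : ℝ) :
    x ^ q * x ^ q * x ^ (-s) = x ^ (2*(q:ℝ) - s) := by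
  rw [← Real.rpow_natCast x q, ← Real.rpow_add hx, ← Real.rpow_add hx]
  congr 1; ring

private lemma term1_upper (q : ℕ) (t s x z : ℝ) (ht2 : t ≤ 2) (hts : t ≤ s)
    (hx1 : 1 ≤ x) (hxz : x ≤ z) (hq : 1 ≤ q) :
    x ^ q * (x+1) ^ q * x ^ (-s) ≤ 2^q * z^(2*(q:ℝ)-t) := by
  have hx0 : (0:ℝ) < x := by linarith
  have hq' : (1:ℝ) ≤ (q:ℝ) := by exact_mod_cast hq
  have hexp : (0:ℝ) ≤ 2*(q:ℝ) - t := by linarith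
  have h1 : x^(-s) ≤ x^(-t) := Real.rpow_le_rpow_of_exponent_le hx1 (by linarith)
  have h2 : (x+1)^q ≤ 2^q * x^q := by
    calc (x+1)^q ≤ (2*x)^q := pow_le_pow_left₀ (by linarith) (by linarith) q
    _ = 2^q * x^q := mul_pow 2 x q
  calc x^q * (x+1)^q * x^(-s)
      ≤ x^q * (2^q*x^q) * x^(-t) := by
        apply mul_le_mul (mul_le_mul le_rfl h2 (by positivity) (by positivity)) h1
          (by positivity) (by positivity)
    _ = 2^q * (x^q*x^q*x^(-t)) := by ring
    _ = 2^q * x^(2*(q:ℝ)-t) := by rw [combine_rpow hx0]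
    _ ≤ 2^q * z^(2*(q:ℝ)-t) := by
        exact mul_le_mul_of_nonneg_left (Real.rpow_le_rpow hx0.le hxz hexp) (by positivity)

private lemma term2_upper (m : ℕ) (t s x z : ℝ) (ht1 : 1 < t) (hts : t ≤ s)
    (hz1 : 1 ≤ z) (hzx : z ≤ x) :
    x ^ (-s) / (x^(m+1) * (x+1)^(m+1)) ≤ z^(-t-2*(m:ℝ)) * (1/x - 1/(x+1)) := by
  have hx0 : (0:ℝ) < x := by linarith
  have hz0 : (0:ℝ) < z := by linarith
  have h1 : x^(-s) ≤ x^(-t) :=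
    Real.rpow_le_rpow_of_exponent_le (by linarith) (by linarith)
  have hden : x^(2*m) * (x*(x+1)) ≤ x^(m+1)*(x+1)^(m+1) := by
    have h2 : x^m ≤ (x+1)^m := pow_le_pow_left₀ hx0.le (by linarith) m
    have e0 : x^(2*m) = x^m * x^m := by rw [two_mul, pow_add]
    calc x^(2*m)*(x*(x+1)) = (x^m * x) * (x^m * (x+1)) := by rw [e0]; ring_nf
    _ ≤ (x^m * x) * ((x+1)^m * (x+1)) := by
        apply mul_le_mul_of_nonneg_left (mul_le_mul_of_nonneg_right h2 (by linarith))
          (by positivity)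
    _ = x^(m+1)*(x+1)^(m+1) := by rw [pow_succ, pow_succ]
  have hquot : x^(-s)/(x^(m+1)*(x+1)^(m+1)) ≤ x^(-t)/(x^(2*m)*(x*(x+1))) :=
    div_le_div₀ (Real.rpow_nonneg hx0.le _) h1 (by positivity) hden
  have e1 : x ^ (-t-2*(m:ℝ)) = x ^ (-t) * (x^(2*m))⁻¹ := by
    rw [← Real.rpow_natCast x (2*m), ← Real.rpow_neg hx0.le, ← Real.rpow_add hx0]
    congr 1; push_cast; ring_nf
  have e2 : x^(-t)/(x^(2*m)*(x*(x+1))) = x^(-t-2*(m:ℝ)) * (1/(x*(x+1))) := by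
    rw [e1]; field_simp
  have e3 : (1/x - 1/(x+1)) = 1/(x*(x+1)) := by
    field_simp; ring
  rw [e3]
  refine hquot.trans ?_
  rw [e2]
  apply mul_le_mul_of_nonneg_right _ (by positivity)
  exact Real.rpow_le_rpow_of_nonpos hz0 hzx (by
    have : (0:ℝ) ≤ (m:ℝ) := Nat.cast_nonneg m
    linarith)

private lemma term1_lower (q : ℕ) (s w x : ℝ) (hsq : s ≤ 2*(q:ℝ)) (hw : 0 ≤ w)
    (hwx : w ≤ x) (hx : 0 < x) :
    w ^ (2*(q:ℝ)-s) ≤ x^q * (x+1)^q * x^(-s) := by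
  calc w ^ (2*(q:ℝ)-s) ≤ x ^ (2*(q:ℝ)-s) := Real.rpow_le_rpow hw hwx (by linarith)
  _ = x^q * x^q * x^(-s) := (combine_rpow hx q s).symm
  _ ≤ x^q * (x+1)^q * x^(-s) := by
      apply mul_le_mul_of_nonneg_right _ (Real.rpow_nonneg hx.le _)
      exact mul_le_mul_of_nonneg_left (pow_le_pow_left₀ hx.le (by linarith) q) (by positivity)

private lemma term2_lower (q : ℕ) (s x Y : ℝ) (hs : 0 ≤ s) (hx : 0 < x) (hY : x + 1 ≤ Y) :
    Y ^ (-(s+2*(q:ℝ))) ≤ x^(-s) / (x^q * (x+1)^q) := by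
  have hx1 : (0:ℝ) < x + 1 := by linarith
  have h1 : (x+1)^(-s) ≤ x^(-s) :=
    Real.rpow_le_rpow_of_nonpos hx (by linarith) (by linarith)
  have h2 : x^q * (x+1)^q ≤ (x+1)^q * (x+1)^q :=
    mul_le_mul_of_nonneg_right (pow_le_pow_left₀ hx.le (by linarith) q) (by positivity)
  have e : (x+1)^(-s) / ((x+1)^q * (x+1)^q) = (x+1) ^ (-(s+2*(q:ℝ))) := by
    rw [← Real.rpow_natCast (x+1) q, ← Real.rpow_add hx1, ← Real.rpow_sub hx1]
    congr 1; push_cast; ring_nf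
  calc Y ^ (-(s+2*(q:ℝ))) ≤ (x+1) ^ (-(s+2*(q:ℝ))) := by
        apply Real.rpow_le_rpow_of_nonpos hx1 hY
        have : (0:ℝ) ≤ (q:ℝ) := Nat.cast_nonneg q
        linarith
  _ = (x+1)^(-s) / ((x+1)^q * (x+1)^q) := e.symm
  _ ≤ x^(-s) / (x^q * (x+1)^q) := div_le_div₀ (Real.rpow_nonneg hx.le _) h1 (by positivity) h2

section
variable (q : ℕ)

private lemma sum_const_ofReal (n : ℕ) (C : ℝ) :
    ∑ _k ∈ Finset.range (n+1), ENNReal.ofReal C = ENNReal.ofReal (((n:ℝ)+1) * C) := by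
  rcases le_or_gt 0 C with hC | hC
  · rw [Finset.sum_const, Finset.card_range, nsmul_eq_mul,
      ENNReal.ofReal_mul (by positivity), ← ENNReal.ofReal_natCast]
    push_cast; ring_nf
  · simp [ENNReal.ofReal_of_nonpos hC.le,
      ENNReal.ofReal_of_nonpos (by nlinarith : ((n:ℝ)+1) * C ≤ 0)]

private lemma S_upper (hq : 1 ≤ q) (t s : ℝ) (ht2 : t ≤ 2) (hts : t ≤ s) (n : ℕ) :
    (∑ k ∈ Finset.range (n + 1),
        ENNReal.ofReal (((k : ℝ) + 1) ^ q * ((k : ℝ) + 2) ^ q * ((k : ℝ) + 1) ^ (-s)))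
      ≤ ENNReal.ofReal (((n:ℝ)+1) * (2^q * ((n:ℝ)+1)^(2*(q:ℝ)-t))) := by
  calc (∑ k ∈ Finset.range (n + 1),
        ENNReal.ofReal (((k : ℝ) + 1) ^ q * ((k : ℝ) + 2) ^ q * ((k : ℝ) + 1) ^ (-s)))
      ≤ ∑ _k ∈ Finset.range (n+1), ENNReal.ofReal (2^q * ((n:ℝ)+1)^(2*(q:ℝ)-t)) := by
        apply Finset.sum_le_sum
        intro k hk
        apply ENNReal.ofReal_le_ofReal
        have hk' : (k:ℝ) ≤ (n:ℝ) := by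
          exact_mod_cast Nat.lt_succ_iff.mp (Finset.mem_range.mp hk)
        have hk0 : (0:ℝ) ≤ (k:ℝ) := Nat.cast_nonneg k
        have := term1_upper q t s ((k:ℝ)+1) ((n:ℝ)+1) ht2 hts (by linarith) (by linarith) hq
        have e : ((k:ℝ)+2) = ((k:ℝ)+1)+1 := by ring
        rw [e]; exact this
    _ = ENNReal.ofReal (((n:ℝ)+1) * (2^q * ((n:ℝ)+1)^(2*(q:ℝ)-t))) :=
        sum_const_ofReal n _

private lemma T_upper (hq : 1 ≤ q) (t s : ℝ) (ht1 : 1 < t) (hts : t ≤ s) (n : ℕ) :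
    (∑' k : ℕ, ENNReal.ofReal
        (((n : ℝ) + (k : ℝ) + 1) ^ (-s) /
          (((n : ℝ) + (k : ℝ) + 1) ^ q * ((n : ℝ) + (k : ℝ) + 2) ^ q)))
      ≤ ENNReal.ofReal (((n:ℝ)+1)^(2-2*(q:ℝ)-t) * (1/((n:ℝ)+1))) := by
  obtain ⟨m, rfl⟩ : ∃ m, q = m + 1 := ⟨q-1, by omega⟩
  have hexp : 2-2*((m+1:ℕ):ℝ)-t = -t-2*(m:ℝ) := by push_cast; ring
  set g : ℕ → ℝ := fun k =>
    ((n:ℝ)+1)^(-t-2*(m:ℝ)) * (1/((n:ℝ)+(k:ℝ)+1) - 1/((n:ℝ)+(k:ℝ)+2)) with hg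
  have hgn : ∀ k, 0 ≤ g k := by
    intro k
    have hx : (0:ℝ) < (n:ℝ)+(k:ℝ)+1 := by positivity
    have : 1/((n:ℝ)+(k:ℝ)+2) ≤ 1/((n:ℝ)+(k:ℝ)+1) :=
      one_div_le_one_div_of_le hx (by linarith)
    have h0 : 0 ≤ 1/((n:ℝ)+(k:ℝ)+1) - 1/((n:ℝ)+(k:ℝ)+2) := by linarith
    exact mul_nonneg (Real.rpow_nonneg (by positivity) _) h0
  calc (∑' k : ℕ, ENNReal.ofReal
        (((n : ℝ) + (k : ℝ) + 1) ^ (-s) /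
          (((n : ℝ) + (k : ℝ) + 1) ^ (m+1) * ((n : ℝ) + (k : ℝ) + 2) ^ (m+1))))
      ≤ ∑' k : ℕ, ENNReal.ofReal (g k) := by
        apply ENNReal.tsum_le_tsum
        intro k
        apply ENNReal.ofReal_le_ofReal
        have hk0 : (0:ℝ) ≤ (k:ℝ) := Nat.cast_nonneg k
        have hn0 : (0:ℝ) ≤ (n:ℝ) := Nat.cast_nonneg n
        have := term2_upper m t s ((n:ℝ)+(k:ℝ)+1) ((n:ℝ)+1) ht1 hts
          (by linarith) (by linarith)
        have e : ((n:ℝ)+(k:ℝ)+2) = ((n:ℝ)+(k:ℝ)+1)+1 := by ring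
        rw [hg]; dsimp only; rw [e]; exact this
    _ ≤ ENNReal.ofReal (((n:ℝ)+1)^(-t-2*(m:ℝ)) * (1/((n:ℝ)+1))) := by
        apply Summable.tsum_le_of_sum_le ENNReal.summable
        intro u
        obtain ⟨N, hN⟩ := u.exists_nat_subset_range
        calc ∑ k ∈ u, ENNReal.ofReal (g k)
            ≤ ∑ k ∈ Finset.range N, ENNReal.ofReal (g k) :=
              Finset.sum_le_sum_of_subset hN
          _ = ENNReal.ofReal (∑ k ∈ Finset.range N, g k) :=
              (ENNReal.ofReal_sum_of_nonneg (fun k _ => hgn k)).symm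
          _ ≤ ENNReal.ofReal (((n:ℝ)+1)^(-t-2*(m:ℝ)) * (1/((n:ℝ)+1))) := by
              apply ENNReal.ofReal_le_ofReal
              set f : ℕ → ℝ := fun k => 1/((n:ℝ)+(k:ℝ)+1) with hf
              have e : ∑ k ∈ Finset.range N, g k
                  = ((n:ℝ)+1)^(-t-2*(m:ℝ)) * ∑ k ∈ Finset.range N, (f k - f (k+1)) := by
                rw [Finset.mul_sum]
                apply Finset.sum_congr rfl
                intro k _
                rw [hg, hf]; dsimp only; push_cast; ring_nf
              rw [e, Finset.sum_range_sub' f N]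
              have hf0 : f 0 = 1/((n:ℝ)+1) := by rw [hf]; norm_num
              have hfN : 0 ≤ f N := by rw [hf]; positivity
              have hC : (0:ℝ) ≤ ((n:ℝ)+1)^(-t-2*(m:ℝ)) := Real.rpow_nonneg (by positivity) _
              rw [← hf0]
              nlinarith [mul_nonneg hC hfN]
    _ = ENNReal.ofReal (((n:ℝ)+1)^(2-2*((m+1:ℕ):ℝ)-t) * (1/((n:ℝ)+1))) := by rw [hexp]
end

section
variable (q : ℕ)

private lemma S_lower (hq : 1 ≤ q) (s : ℝ) (hs0 : 0 ≤ s) (hs1 : s ≤ 1) (n : ℕ) :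
    ENNReal.ofReal ((((n:ℝ)+1)/2) * ((((n:ℝ)+1)/2)^(2*(q:ℝ)-s)))
      ≤ ∑ k ∈ Finset.range (n + 1),
          ENNReal.ofReal (((k : ℝ) + 1) ^ q * ((k : ℝ) + 2) ^ q * ((k : ℝ) + 1) ^ (-s)) := by
  have hq' : (1:ℝ) ≤ (q:ℝ) := by exact_mod_cast hq
  have hw : (0:ℝ) ≤ ((n:ℝ)+1)/2 := by positivity
  have hhalf : ((n:ℝ)+1)/2 ≤ ((n/2:ℕ):ℝ) + 1 := by
    have h : n ≤ 2*(n/2)+1 := by omega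
    have := (Nat.cast_le (α := ℝ)).2 h
    push_cast at this
    linarith
  have hsub : Finset.Icc (n/2) n ⊆ Finset.range (n+1) := by
    intro k hk
    exact Finset.mem_range.mpr (Nat.lt_succ_of_le (Finset.mem_Icc.mp hk).2)
  calc ENNReal.ofReal ((((n:ℝ)+1)/2) * ((((n:ℝ)+1)/2)^(2*(q:ℝ)-s)))
      = ENNReal.ofReal (((n:ℝ)+1)/2) * ENNReal.ofReal ((((n:ℝ)+1)/2)^(2*(q:ℝ)-s)) :=
        ENNReal.ofReal_mul hw
    _ ≤ (((Finset.Icc (n/2) n).card : ℕ) : ℝ≥0∞) *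
          ENNReal.ofReal ((((n:ℝ)+1)/2)^(2*(q:ℝ)-s)) := by
        apply mul_le_mul_of_nonneg_right _ zero_le
        rw [← ENNReal.ofReal_natCast]
        apply ENNReal.ofReal_le_ofReal
        rw [Nat.card_Icc]
        have h1 : n/2 ≤ n + 1 := by omega
        have h2 : ((n/2:ℕ):ℝ) ≤ (n:ℝ)/2 := by exact_mod_cast Nat.cast_div_le
        rw [Nat.cast_sub h1]
        push_cast
        linarith
    _ = ∑ _k ∈ Finset.Icc (n/2) n, ENNReal.ofReal ((((n:ℝ)+1)/2)^(2*(q:ℝ)-s)) := by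
        rw [Finset.sum_const, nsmul_eq_mul]
    _ ≤ ∑ k ∈ Finset.Icc (n/2) n,
          ENNReal.ofReal (((k : ℝ) + 1) ^ q * ((k : ℝ) + 2) ^ q * ((k : ℝ) + 1) ^ (-s)) := by
        apply Finset.sum_le_sum
        intro k hk
        apply ENNReal.ofReal_le_ofReal
        have hk1 : n/2 ≤ k := (Finset.mem_Icc.mp hk).1
        have hk1' : ((n/2:ℕ):ℝ) ≤ (k:ℝ) := by exact_mod_cast hk1
        have hk0 : (0:ℝ) ≤ (k:ℝ) := Nat.cast_nonneg k
        have := term1_lower q s (((n:ℝ)+1)/2) ((k:ℝ)+1) (by linarith) hw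
          (by linarith) (by linarith)
        have e : ((k:ℝ)+2) = ((k:ℝ)+1)+1 := by ring
        rw [e]; exact this
    _ ≤ ∑ k ∈ Finset.range (n+1),
          ENNReal.ofReal (((k : ℝ) + 1) ^ q * ((k : ℝ) + 2) ^ q * ((k : ℝ) + 1) ^ (-s)) :=
        Finset.sum_le_sum_of_subset hsub

private lemma T_lower (hq : 1 ≤ q) (s : ℝ) (hs0 : 0 ≤ s) (n : ℕ) :
    ENNReal.ofReal (((n:ℝ)+1) * (2*((n:ℝ)+1))^(-(s+2*(q:ℝ))))
      ≤ ∑' k : ℕ, ENNReal.ofReal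
          (((n : ℝ) + (k : ℝ) + 1) ^ (-s) /
            (((n : ℝ) + (k : ℝ) + 1) ^ q * ((n : ℝ) + (k : ℝ) + 2) ^ q)) := by
  calc ENNReal.ofReal (((n:ℝ)+1) * (2*((n:ℝ)+1))^(-(s+2*(q:ℝ))))
      = ∑ _k ∈ Finset.range (n+1),
          ENNReal.ofReal ((2*((n:ℝ)+1))^(-(s+2*(q:ℝ)))) := (sum_const_ofReal n _).symm
    _ ≤ ∑ k ∈ Finset.range (n+1), ENNReal.ofReal
          (((n : ℝ) + (k : ℝ) + 1) ^ (-s) /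
            (((n : ℝ) + (k : ℝ) + 1) ^ q * ((n : ℝ) + (k : ℝ) + 2) ^ q)) := by
        apply Finset.sum_le_sum
        intro k hk
        apply ENNReal.ofReal_le_ofReal
        have hk' : (k:ℝ) ≤ (n:ℝ) := by
          exact_mod_cast Nat.lt_succ_iff.mp (Finset.mem_range.mp hk)
        have hk0 : (0:ℝ) ≤ (k:ℝ) := Nat.cast_nonneg k
        have hn0 : (0:ℝ) ≤ (n:ℝ) := Nat.cast_nonneg n
        have := term2_lower q s ((n:ℝ)+(k:ℝ)+1) (2*((n:ℝ)+1)) hs0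
          (by positivity) (by linarith)
        have e : ((n:ℝ)+(k:ℝ)+2) = ((n:ℝ)+(k:ℝ)+1)+1 := by ring
        rw [e]; exact this
    _ ≤ ∑' k : ℕ, ENNReal.ofReal
          (((n : ℝ) + (k : ℝ) + 1) ^ (-s) /
            (((n : ℝ) + (k : ℝ) + 1) ^ q * ((n : ℝ) + (k : ℝ) + 2) ^ q)) :=
        ENNReal.sum_le_tsum _

private lemma final_upper (z t : ℝ) (hz : 0 < z) :
    (z * (2^q * z^(2*(q:ℝ)-t))) * (z^(2-2*(q:ℝ)-t) * (1/z)) = 2^q * z^(2-2*t) := by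
  have hf : ∀ u v : ℝ, z^u * z^v = z^(u+v) := fun u v => (Real.rpow_add hz u v).symm
  rw [one_div, ← Real.rpow_neg_one z]
  nth_rewrite 1 [← Real.rpow_one z]
  calc (z^(1:ℝ) * (2^q * z^(2*(q:ℝ)-t))) * (z^(2-2*(q:ℝ)-t) * z^(-1:ℝ))
      = 2^q * (z^(1:ℝ) * z^(2*(q:ℝ)-t) * z^(2-2*(q:ℝ)-t) * z^(-1:ℝ)) := by ring
    _ = 2^q * z^(2-2*t) := by
        rw [hf, hf, hf]
        congr 1
        congr 1
        ring

private lemma final_lower (z s qr : ℝ) (hz : 1 ≤ z) (hs1 : s ≤ 1) :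
    (2:ℝ)^(-(4*qr+1)) ≤ (z/2 * (z/2)^(2*qr-s)) * (z * (2*z)^(-(s+2*qr))) := by
  have hz0 : (0:ℝ) < z := by linarith
  have h2 : (0:ℝ) < 2 := two_pos
  have hf : ∀ u v : ℝ, z^u * z^v = z^(u+v) := fun u v => (Real.rpow_add hz0 u v).symm
  have hg : ∀ u v : ℝ, (2:ℝ)^u * (2:ℝ)^v = (2:ℝ)^(u+v) := fun u v => (Real.rpow_add h2 u v).symm
  have e1 : (z/2)^(2*qr-s) = z^(2*qr-s) * (2:ℝ)^(-(2*qr-s)) := by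
    rw [Real.div_rpow hz0.le h2.le, Real.rpow_neg h2.le, div_eq_mul_inv]
  have e2 : (2*z)^(-(s+2*qr)) = (2:ℝ)^(-(s+2*qr)) * z^(-(s+2*qr)) :=
    Real.mul_rpow h2.le hz0.le
  have key : (z/2 * (z/2)^(2*qr-s)) * (z * (2*z)^(-(s+2*qr)))
      = (2:ℝ)^(-(4*qr+1)) * z^(2-2*s) := by
    rw [e1, e2]
    calc (z/2 * (z^(2*qr-s) * 2^(-(2*qr-s)))) * (z * (2^(-(s+2*qr)) * z^(-(s+2*qr))))
        = (z^(1:ℝ) * z^(2*qr-s) * z^(1:ℝ) * z^(-(s+2*qr))) *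
            (2^(-1:ℝ) * 2^(-(2*qr-s)) * 2^(-(s+2*qr))) := by
          rw [Real.rpow_one, Real.rpow_neg_one]; ring
      _ = z^(2-2*s) * 2^(-(4*qr+1)) := by
          rw [hf, hf, hf, hg, hg]
          congr 1
          · congr 1; ring
          · congr 1; ring
      _ = (2:ℝ)^(-(4*qr+1)) * z^(2-2*s) := mul_comm _ _
  rw [key]
  have h1 : (1:ℝ) ≤ z^(2-2*s) := by
    rw [← Real.one_rpow (2-2*s)]
    exact Real.rpow_le_rpow zero_le_one hz (by linarith)
  nth_rewrite 1 [← mul_one ((2:ℝ)^(-(4*qr+1)))]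
  exact mul_le_mul_of_nonneg_left h1 (Real.rpow_nonneg h2.le _)

end

/-- Corollary 10.6(ii).  For the antitree `A^q` with
`sₙ = (n+1)^q` and `ℓₖ = (k+1)^{−s}`, `0 ≤ s ≤ 2q+1`, the quantity
`(Σ_{k ≤ n} (k+1)^q (k+2)^q (k+1)^{−s})(Σ_{k ≥ n} (k+1)^{−s}/((k+1)^q(k+2)^q))`
tends to `0` iff `s > 1`. -/
theorem polynomial_antitree_discrete_iff (q : ℕ) (hq : 1 ≤ q)
    (s : ℝ) (hs0 : 0 ≤ s) (hs1 : s ≤ 2 * (q : ℝ) + 1) :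
    Tendsto
      (fun n : ℕ =>
        (∑ k ∈ Finset.range (n + 1),
            ENNReal.ofReal
              (((k : ℝ) + 1) ^ q * ((k : ℝ) + 2) ^ q * ((k : ℝ) + 1) ^ (-s))) *
          ∑' k : ℕ,
            ENNReal.ofReal
              (((n : ℝ) + (k : ℝ) + 1) ^ (-s) /
                (((n : ℝ) + (k : ℝ) + 1) ^ q * ((n : ℝ) + (k : ℝ) + 2) ^ q)))
      atTop (𝓝 0) ↔ 1 < s := by
  have hq' : (1:ℝ) ≤ (q:ℝ) := by exact_mod_cast hq
  constructor
  · intro h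
    by_contra hs
    push_neg at hs
    have hcpos : (0:ℝ≥0∞) < ENNReal.ofReal ((2:ℝ)^(-(4*(q:ℝ)+1))) :=
      ENNReal.ofReal_pos.mpr (by positivity)
    obtain ⟨n, hn⟩ := (h.eventually_lt_const hcpos).exists
    refine absurd ?_ (not_le.mpr hn)
    have hS := S_lower q hq s hs0 hs n
    have hT := T_lower q hq s hs0 n
    calc ENNReal.ofReal ((2:ℝ)^(-(4*(q:ℝ)+1)))
        ≤ ENNReal.ofReal (((((n:ℝ)+1)/2) * ((((n:ℝ)+1)/2)^(2*(q:ℝ)-s))) *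
            (((n:ℝ)+1) * (2*((n:ℝ)+1))^(-(s+2*(q:ℝ))))) := by
          apply ENNReal.ofReal_le_ofReal
          exact final_lower ((n:ℝ)+1) s (q:ℝ) (by linarith [Nat.cast_nonneg (α := ℝ) n]) hs
      _ = ENNReal.ofReal ((((n:ℝ)+1)/2) * ((((n:ℝ)+1)/2)^(2*(q:ℝ)-s))) *
            ENNReal.ofReal (((n:ℝ)+1) * (2*((n:ℝ)+1))^(-(s+2*(q:ℝ)))) := by
          apply ENNReal.ofReal_mul
          positivity
      _ ≤ _ := mul_le_mul' hS hT
  · intro hs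
    set t := min s 2 with ht
    have ht1 : 1 < t := lt_min hs one_lt_two
    have ht2 : t ≤ 2 := min_le_right _ _
    have hts : t ≤ s := min_le_left _ _
    have upper : ∀ n : ℕ,
        (∑ k ∈ Finset.range (n + 1),
            ENNReal.ofReal
              (((k : ℝ) + 1) ^ q * ((k : ℝ) + 2) ^ q * ((k : ℝ) + 1) ^ (-s))) *
          (∑' k : ℕ,
            ENNReal.ofReal
              (((n : ℝ) + (k : ℝ) + 1) ^ (-s) /
                (((n : ℝ) + (k : ℝ) + 1) ^ q * ((n : ℝ) + (k : ℝ) + 2) ^ q)))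
        ≤ ENNReal.ofReal ((2:ℝ)^q) * ENNReal.ofReal (((n:ℝ)+1)^(2-2*t)) := by
      intro n
      have hz : (0:ℝ) < (n:ℝ)+1 := by positivity
      calc _ ≤ ENNReal.ofReal (((n:ℝ)+1) * (2^q * ((n:ℝ)+1)^(2*(q:ℝ)-t))) *
            ENNReal.ofReal (((n:ℝ)+1)^(2-2*(q:ℝ)-t) * (1/((n:ℝ)+1))) :=
          mul_le_mul' (S_upper q hq t s ht2 hts n) (T_upper q hq t s ht1 hts n)
        _ = ENNReal.ofReal ((((n:ℝ)+1) * (2^q * ((n:ℝ)+1)^(2*(q:ℝ)-t))) *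
            (((n:ℝ)+1)^(2-2*(q:ℝ)-t) * (1/((n:ℝ)+1)))) :=
          (ENNReal.ofReal_mul (by positivity)).symm
        _ = ENNReal.ofReal ((2:ℝ)^q * ((n:ℝ)+1)^(2-2*t)) := by
          rw [final_upper q ((n:ℝ)+1) t hz]
        _ = ENNReal.ofReal ((2:ℝ)^q) * ENNReal.ofReal (((n:ℝ)+1)^(2-2*t)) :=
          ENNReal.ofReal_mul (by positivity)
    have h1 : Tendsto (fun n : ℕ => ((n:ℝ)+1)^(2-2*t)) atTop (𝓝 0) := by
      have h2 : Tendsto (fun n : ℕ => ((n:ℝ)+1)) atTop atTop :=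
        tendsto_atTop_add_const_right _ 1 tendsto_natCast_atTop_atTop
      have h3 := (tendsto_rpow_neg_atTop (y := 2*t-2) (by linarith)).comp h2
      simpa [Function.comp_def, show -(2*t-2) = 2-2*t from by ring] using h3
    have h4 : Tendsto (fun n : ℕ => ENNReal.ofReal (((n:ℝ)+1)^(2-2*t))) atTop (𝓝 0) := by
      have := (ENNReal.continuous_ofReal.tendsto 0).comp h1
      simpa [Function.comp_def] using this
    have h5 := ENNReal.Tendsto.const_mul (a := ENNReal.ofReal ((2:ℝ)^q)) h4 (Or.inr ENNReal.ofReal_ne_top)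
    rw [mul_zero] at h5
    exact tendsto_of_tendsto_of_tendsto_of_le_of_le tendsto_const_nhds h5
      (fun n => zero_le) upper
end

section
/- Let q ∈ ℕ with q ≥ 1 and let s be a real number with 0 ≤ s ≤ 2q+1. With ℓ_k = (k+1)^{−s}, one has sup_{n ∈ ℕ} (Σ_{k=0}^n (k+1)^q (k+2)^q (k+1)^{−s})·(Σ_{k=n}^∞ (k+1)^{−s}/((k+1)^q (k+2)^q)) < ∞ (tail sums and products taken in [0,∞]) if and only if s ≥ 1. -/
open Filter Topology
open scoped ENNReal


private lemma tele_step {r m : ℝ} (hr : 1 ≤ r) (hm : 1 ≤ m) :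
    (m + 1) ^ (-(r + 1)) ≤ m ^ (-r) - (m + 1) ^ (-r) := by
  have hm0 : (0:ℝ) < m := lt_of_lt_of_le one_pos hm
  have hm1 : (0:ℝ) < m + 1 := by linarith
  set X := m ^ r with hX
  set Y := (m + 1) ^ r with hY
  have hX0 : 0 < X := Real.rpow_pos_of_pos hm0 r
  have hY0 : 0 < Y := Real.rpow_pos_of_pos hm1 r
  have hP0 : 0 < m ^ (r - 1) := Real.rpow_pos_of_pos hm0 _
  have hPm : m ^ (r - 1) * m = X := by
    rw [hX]
    have h := Real.rpow_add hm0 (r-1) 1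
    rw [Real.rpow_one] at h
    rw [← h, sub_add_cancel]
  -- Bernoulli step : X + m^(r-1) ≤ Y
  have hkey : X + m ^ (r - 1) ≤ Y := by
    have hb : 1 + r * (1 / m) ≤ (1 + 1 / m) ^ r :=
      one_add_mul_self_le_rpow_one_add (le_trans (by norm_num) (by positivity : (0:ℝ) ≤ 1/m)) hr
    have h2 : Y = X * (1 + 1 / m) ^ r := by
      rw [hY, hX, ← Real.mul_rpow hm0.le (by positivity)]
      congr 1
      field_simp
    have h3 : X * (1 + r * (1 / m)) ≤ Y := by
      rw [h2]
      exact mul_le_mul_of_nonneg_left hb hX0.le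
    have h4 : X * (1 + r * (1 / m)) = X + r * (X / m) := by ring
    have h5 : X / m = m ^ (r - 1) := by
      field_simp [← hPm]
      linarith [hPm]
    nlinarith [hP0]
  -- now conclude
  rw [Real.rpow_neg hm1.le, Real.rpow_neg hm0.le, Real.rpow_neg hm1.le]
  have hZ : (m + 1) ^ (r + 1) = Y * (m + 1) := by
    rw [Real.rpow_add hm1, Real.rpow_one, hY]
  rw [hZ, mul_inv]
  rw [inv_eq_one_div, inv_eq_one_div, inv_eq_one_div, div_mul_div_comm, one_mul,
    div_sub_div _ _ hX0.ne' hY0.ne', one_mul, mul_one]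
  rw [div_le_div_iff₀ (by positivity) (by positivity)]
  have h6 : m ^ (r-1) * Y * m ≤ m ^ (r-1) * Y * (m+1) := by nlinarith [mul_pos hP0 hY0]
  have h7 : m ^ (r-1) * (Y * (m+1)) ≤ (Y - X) * (Y * (m+1)) := by
    apply mul_le_mul_of_nonneg_right (by linarith) (by positivity)
  nlinarith [h6, h7, hPm, hY0]


private lemma tail_sum_le {p : ℝ} (hp : 2 ≤ p) (n : ℕ) :
    ∑' k : ℕ, ENNReal.ofReal (((n:ℝ) + (k:ℝ) + 1) ^ (-p)) ≤
      ENNReal.ofReal (2 * ((n:ℝ) + 1) ^ (1 - p)) := by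
  rw [ENNReal.tsum_eq_iSup_nat]
  refine iSup_le fun K => ?_
  rw [← ENNReal.ofReal_sum_of_nonneg
    (fun i _ => Real.rpow_nonneg (by positivity) _)]
  apply ENNReal.ofReal_le_ofReal
  set g : ℕ → ℝ := fun k => ((n:ℝ) + k + 1) ^ (-(p-1)) with hgdef
  rcases K with _ | K
  · simp; positivity
  rw [Finset.sum_range_succ']
  have hg : ∀ k : ℕ, ((n:ℝ) + ((k:ℕ)+1:ℕ) + 1) ^ (-p) ≤ g k - g (k+1) := by
    intro k
    simp only [hgdef]
    have h := tele_step (r := p - 1) (m := (n:ℝ) + k + 1)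
      (by linarith) (by push_cast; linarith [Nat.cast_nonneg (α := ℝ) n, Nat.cast_nonneg (α := ℝ) k])
    have e1 : (n:ℝ) + k + 1 + 1 = (n:ℝ) + (k+1) + 1 := by ring
    have e2 : -(p - 1 + 1) = -p := by ring
    rw [e1, e2] at h
    calc ((n:ℝ) + ((k:ℕ)+1:ℕ) + 1) ^ (-p)
        = ((n:ℝ) + (k+1) + 1) ^ (-p) := by push_cast; ring_nf
      _ ≤ _ := by push_cast; push_cast at h; convert h using 3 <;> ring
  have htel : ∑ k ∈ Finset.range K, (((n:ℝ) + ((k:ℕ)+1:ℕ) + 1) ^ (-p)) ≤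
      ((n:ℝ) + 1) ^ (-(p-1)) := by
    calc ∑ k ∈ Finset.range K, (((n:ℝ) + ((k:ℕ)+1:ℕ) + 1) ^ (-p))
        ≤ ∑ k ∈ Finset.range K, (g k - g (k+1)) :=
          Finset.sum_le_sum (fun k _ => hg k)
      _ = g 0 - g K := Finset.sum_range_sub' g K
      _ = ((n:ℝ) + 0 + 1) ^ (-(p-1)) - ((n:ℝ) + K + 1) ^ (-(p-1)) := by
          simp only [hgdef]; norm_num
      _ ≤ ((n:ℝ) + 1) ^ (-(p-1)) := by
          have : (0:ℝ) ≤ ((n:ℝ) + K + 1) ^ (-(p-1)) := Real.rpow_nonneg (by positivity) _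
          rw [add_zero]
          linarith
  have h0 : ((n:ℝ) + (0:ℕ) + 1) ^ (-p) ≤ ((n:ℝ) + 1) ^ (1 - p) := by
    push_cast
    rw [add_zero]
    exact Real.rpow_le_rpow_of_exponent_le (by linarith [Nat.cast_nonneg (α := ℝ) n]) (by linarith)
  have e3 : -(p - 1) = 1 - p := by ring
  rw [e3] at htel
  -- combine
  calc (∑ k ∈ Finset.range K, (((n:ℝ) + ((k+1:ℕ):ℝ) + 1) ^ (-p))) + ((n:ℝ) + ((0:ℕ):ℝ) + 1) ^ (-p)
      ≤ ((n:ℝ) + 1) ^ (1-p) + ((n:ℝ) + 1) ^ (1-p) := by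
        apply add_le_add ?_ h0
        calc ∑ k ∈ Finset.range K, (((n:ℝ) + ((k+1:ℕ):ℝ) + 1) ^ (-p))
            = ∑ k ∈ Finset.range K, (((n:ℝ) + ((k:ℕ)+1:ℕ) + 1) ^ (-p)) := by
              apply Finset.sum_congr rfl; intro k _; norm_num
          _ ≤ _ := htel
    _ = 2 * ((n:ℝ) + 1) ^ (1 - p) := by ring

/-- Corollary 10.6(iii).  For the antitree `A^q` with
`sₙ = (n+1)^q` and `ℓₖ = (k+1)^{−s}`, `0 ≤ s ≤ 2q+1`:
`sup_n (Σ_{k ≤ n} (k+1)^q (k+2)^q (k+1)^{−s})(Σ_{k ≥ n} (k+1)^{−s}/((k+1)^q(k+2)^q)) < ∞`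
iff `s ≥ 1`. -/
theorem polynomial_antitree_positive_iff (q : ℕ) (hq : 1 ≤ q)
    (s : ℝ) (hs0 : 0 ≤ s) (hs1 : s ≤ 2 * (q : ℝ) + 1) :
    (⨆ n : ℕ,
        (∑ k ∈ Finset.range (n + 1),
            ENNReal.ofReal
              (((k : ℝ) + 1) ^ q * ((k : ℝ) + 2) ^ q * ((k : ℝ) + 1) ^ (-s))) *
          ∑' k : ℕ,
            ENNReal.ofReal
              (((n : ℝ) + (k : ℝ) + 1) ^ (-s) /
                (((n : ℝ) + (k : ℝ) + 1) ^ q * ((n : ℝ) + (k : ℝ) + 2) ^ q))) < ∞ ↔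
      1 ≤ s := by
  have hq' : (1:ℝ) ≤ (q:ℝ) := by exact_mod_cast hq
  set F : ℕ → ℝ≥0∞ := fun n =>
    (∑ k ∈ Finset.range (n + 1),
        ENNReal.ofReal
          (((k : ℝ) + 1) ^ q * ((k : ℝ) + 2) ^ q * ((k : ℝ) + 1) ^ (-s))) *
      ∑' k : ℕ,
        ENNReal.ofReal
          (((n : ℝ) + (k : ℝ) + 1) ^ (-s) /
            (((n : ℝ) + (k : ℝ) + 1) ^ q * ((n : ℝ) + (k : ℝ) + 2) ^ q)) with hF
  constructor
  · -- finiteness forces 1 ≤ s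
    intro hfin
    by_contra hcon
    push_neg at hcon
    set c : ℝ := (3:ℝ) ^ (-(s + 2*(q:ℝ))) with hc
    have hc0 : 0 < c := Real.rpow_pos_of_pos (by norm_num) _
    set ε : ℝ := 2 - 2*s with hε
    have hε0 : 0 < ε := by simp only [hε]; linarith
    -- lower bound for F (2n+1)
    have key : ∀ n : ℕ, ENNReal.ofReal (c * ((n:ℝ)+1)^ε) ≤ F (2*n+1) := by
      intro n
      have hu0 : (0:ℝ) < (n:ℝ) + 1 := by positivity
      have hu1 : (1:ℝ) ≤ (n:ℝ) + 1 := by linarith [Nat.cast_nonneg (α := ℝ) n]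
      -- partial sum lower bound
      have hA : ENNReal.ofReal (((n:ℝ)+1) * ((n:ℝ)+1)^(2*(q:ℝ)-s)) ≤
          ∑ k ∈ Finset.range (2*n+1 + 1),
            ENNReal.ofReal
              (((k : ℝ) + 1) ^ q * ((k : ℝ) + 2) ^ q * ((k : ℝ) + 1) ^ (-s)) := by
        have hsub : Finset.Ico (n+1) (2*n+1+1) ⊆ Finset.range (2*n+1+1) := by
          intro x hx
          simp only [Finset.mem_Ico, Finset.mem_range] at *
          omega
        refine le_trans ?_ (Finset.sum_le_sum_of_subset hsub)
        have hper : ∀ k ∈ Finset.Ico (n+1) (2*n+1+1),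
            ENNReal.ofReal (((n:ℝ)+1)^(2*(q:ℝ)-s)) ≤
              ENNReal.ofReal
                (((k : ℝ) + 1) ^ q * ((k : ℝ) + 2) ^ q * ((k : ℝ) + 1) ^ (-s)) := by
          intro k hk
          simp only [Finset.mem_Ico] at hk
          have hk1 : ((n:ℝ)+1) ≤ (k:ℝ)+1 := by
            have : (n:ℕ) + 1 ≤ k := hk.1
            have := (Nat.cast_le (α := ℝ)).2 this
            push_cast at this ⊢
            linarith
          have hkpos : (0:ℝ) < (k:ℝ) + 1 := by linarith
          apply ENNReal.ofReal_le_ofReal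
          calc ((n:ℝ)+1)^(2*(q:ℝ)-s)
              ≤ ((k:ℝ)+1)^(2*(q:ℝ)-s) :=
                Real.rpow_le_rpow hu0.le hk1 (by linarith)
            _ = ((k:ℝ)+1)^(2*q:ℕ) * ((k:ℝ)+1)^(-s) := by
                rw [← Real.rpow_natCast ((k:ℝ)+1) (2*q), ← Real.rpow_add hkpos]
                congr 1
                push_cast
                ring
            _ = ((k:ℝ)+1)^q * ((k:ℝ)+1)^q * ((k:ℝ)+1)^(-s) := by
                rw [← pow_add]
                congr 2
                omega
            _ ≤ ((k : ℝ) + 1) ^ q * ((k : ℝ) + 2) ^ q * ((k : ℝ) + 1) ^ (-s) := by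
                have h2 : ((k:ℝ)+1)^q ≤ ((k:ℝ)+2)^q :=
                  pow_le_pow_left₀ (by positivity) (by linarith) q
                have h3 : (0:ℝ) ≤ ((k:ℝ)+1)^(-s) := Real.rpow_nonneg hkpos.le _
                have h4 : (0:ℝ) ≤ ((k:ℝ)+1)^q := by positivity
                nlinarith [mul_le_mul_of_nonneg_left h2 h4]
        refine le_trans ?_ (Finset.card_nsmul_le_sum _ _ _ hper)
        rw [Nat.card_Ico]
        have hcard : 2*n+1+1 - (n+1) = n+1 := by omega
        rw [hcard, nsmul_eq_mul]
        rw [← ENNReal.ofReal_natCast (n+1), ← ENNReal.ofReal_mul (by positivity)]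
        apply ENNReal.ofReal_le_ofReal
        push_cast
        exact le_rfl
      -- tail lower bound
      have hB : ENNReal.ofReal (((n:ℝ)+1) * (3*((n:ℝ)+1))^(-(s+2*(q:ℝ)))) ≤
          ∑' k : ℕ,
            ENNReal.ofReal
              ((((2*n+1:ℕ):ℝ) + (k:ℝ) + 1) ^ (-s) /
                ((((2*n+1:ℕ):ℝ) + (k:ℝ) + 1) ^ q * (((2*n+1:ℕ):ℝ) + (k:ℝ) + 2) ^ q)) := by
        refine le_trans ?_ (ENNReal.sum_le_tsum (Finset.range (n+1)))
        have hA3 : (0:ℝ) < 3*((n:ℝ)+1) := by positivity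
        have hper : ∀ k ∈ Finset.range (n+1),
            ENNReal.ofReal ((3*((n:ℝ)+1))^(-(s+2*(q:ℝ)))) ≤
              ENNReal.ofReal
                ((((2*n+1:ℕ):ℝ) + (k:ℝ) + 1) ^ (-s) /
                  ((((2*n+1:ℕ):ℝ) + (k:ℝ) + 1) ^ q * (((2*n+1:ℕ):ℝ) + (k:ℝ) + 2) ^ q)) := by
          intro k hk
          simp only [Finset.mem_range] at hk
          have hkn : (k:ℝ) ≤ (n:ℝ) := by exact_mod_cast Nat.lt_succ_iff.mp hk
          have hX : (0:ℝ) < ((2*n+1:ℕ):ℝ) + (k:ℝ) + 1 := by positivity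
          have hXb : ((2*n+1:ℕ):ℝ) + (k:ℝ) + 1 ≤ 3*((n:ℝ)+1) := by push_cast; linarith
          have hYb : ((2*n+1:ℕ):ℝ) + (k:ℝ) + 2 ≤ 3*((n:ℝ)+1) := by push_cast; linarith
          apply ENNReal.ofReal_le_ofReal
          have e : (3*((n:ℝ)+1))^(-(s+2*(q:ℝ))) =
              (3*((n:ℝ)+1))^(-s) / (3*((n:ℝ)+1))^(2*q:ℕ) := by
            rw [← Real.rpow_natCast (3*((n:ℝ)+1)) (2*q), ← Real.rpow_sub hA3]
            congr 1
            push_cast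
            ring
          rw [e]
          have hnum : (3*((n:ℝ)+1))^(-s) ≤ (((2*n+1:ℕ):ℝ) + (k:ℝ) + 1)^(-s) :=
            Real.rpow_le_rpow_of_nonpos hX hXb (neg_nonpos.mpr hs0)
          have hden : (((2*n+1:ℕ):ℝ) + (k:ℝ) + 1) ^ q * (((2*n+1:ℕ):ℝ) + (k:ℝ) + 2) ^ q ≤
              (3*((n:ℝ)+1))^(2*q:ℕ) := by
            have h1 : (((2*n+1:ℕ):ℝ) + (k:ℝ) + 1) ^ q ≤ (3*((n:ℝ)+1))^q :=
              pow_le_pow_left₀ (by positivity) hXb q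
            have h2 : (((2*n+1:ℕ):ℝ) + (k:ℝ) + 2) ^ q ≤ (3*((n:ℝ)+1))^q :=
              pow_le_pow_left₀ (by positivity) hYb q
            calc (((2*n+1:ℕ):ℝ) + (k:ℝ) + 1) ^ q * (((2*n+1:ℕ):ℝ) + (k:ℝ) + 2) ^ q
                ≤ (3*((n:ℝ)+1))^q * (3*((n:ℝ)+1))^q := by
                  apply mul_le_mul h1 h2 (by positivity) (by positivity)
              _ = (3*((n:ℝ)+1))^(2*q:ℕ) := by rw [← pow_add]; congr 1; omega
          have hdpos : (0:ℝ) < (((2*n+1:ℕ):ℝ) + (k:ℝ) + 1) ^ q * (((2*n+1:ℕ):ℝ) + (k:ℝ) + 2) ^ q := by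
            positivity
          exact div_le_div₀ (Real.rpow_nonneg hX.le _) hnum hdpos hden
        refine le_trans ?_ (Finset.card_nsmul_le_sum _ _ _ hper)
        rw [Finset.card_range, nsmul_eq_mul]
        rw [← ENNReal.ofReal_natCast (n+1), ← ENNReal.ofReal_mul (by positivity)]
        apply ENNReal.ofReal_le_ofReal
        push_cast
        exact le_rfl
      -- combine the two bounds
      have h3u : (3*((n:ℝ)+1))^(-(s+2*(q:ℝ))) = c * ((n:ℝ)+1)^(-(s+2*(q:ℝ))) := by
        rw [Real.mul_rpow (by norm_num) hu0.le, hc]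
      have e1 : ((n:ℝ)+1) * ((n:ℝ)+1)^(2*(q:ℝ)-s) = ((n:ℝ)+1)^((2*(q:ℝ)-s)+1) := by
        rw [Real.rpow_add_one hu0.ne']
        ring
      have e2 : ((n:ℝ)+1) * ((n:ℝ)+1)^(-(s+2*(q:ℝ))) = ((n:ℝ)+1)^((-(s+2*(q:ℝ)))+1) := by
        rw [Real.rpow_add_one hu0.ne']
        ring
      have hrr : (((n:ℝ)+1) * ((n:ℝ)+1)^(2*(q:ℝ)-s)) *
          (((n:ℝ)+1) * (3*((n:ℝ)+1))^(-(s+2*(q:ℝ)))) = c * ((n:ℝ)+1)^ε := by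
        rw [h3u]
        calc (((n:ℝ)+1) * ((n:ℝ)+1)^(2*(q:ℝ)-s)) *
            (((n:ℝ)+1) * (c * ((n:ℝ)+1)^(-(s+2*(q:ℝ)))))
            = c * ((((n:ℝ)+1) * ((n:ℝ)+1)^(2*(q:ℝ)-s)) *
                (((n:ℝ)+1) * ((n:ℝ)+1)^(-(s+2*(q:ℝ))))) := by ring
          _ = c * (((n:ℝ)+1)^((2*(q:ℝ)-s)+1) * ((n:ℝ)+1)^((-(s+2*(q:ℝ)))+1)) := by
              rw [e1, e2]
          _ = c * ((n:ℝ)+1)^(((2*(q:ℝ)-s)+1) + ((-(s+2*(q:ℝ)))+1)) := by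
              rw [← Real.rpow_add hu0]
          _ = c * ((n:ℝ)+1)^ε := by
              congr 1
              rw [hε]
              ring
      simp only [hF]
      calc ENNReal.ofReal (c * ((n:ℝ)+1)^ε)
          = ENNReal.ofReal (((n:ℝ)+1) * ((n:ℝ)+1)^(2*(q:ℝ)-s)) *
            ENNReal.ofReal (((n:ℝ)+1) * (3*((n:ℝ)+1))^(-(s+2*(q:ℝ)))) := by
            rw [← ENNReal.ofReal_mul (by positivity), hrr]
        _ ≤ _ := mul_le_mul' hA hB
    -- derive a contradiction from boundedness
    set M : ℝ := (iSup F).toReal with hM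
    have hub : ∀ n : ℕ, c * ((n:ℝ)+1)^ε ≤ M := by
      intro n
      have h1 : ENNReal.ofReal (c * ((n:ℝ)+1)^ε) ≤ iSup F :=
        le_trans (key n) (le_iSup F (2*n+1))
      exact (ENNReal.ofReal_le_iff_le_toReal hfin.ne).mp h1
    have hM0 : c ≤ M := by
      have := hub 0
      simpa [Real.one_rpow] using this
    have hT0 : (0:ℝ) ≤ (M + c)/c := by positivity
    obtain ⟨N, hN⟩ := exists_nat_ge (((M + c)/c)^(ε⁻¹))
    have hTN : ((M + c)/c) ≤ ((N:ℝ)+1)^ε := by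
      have hle : ((M + c)/c)^(ε⁻¹) ≤ (N:ℝ)+1 := by
        have : (0:ℝ) ≤ (N:ℝ) := Nat.cast_nonneg N
        linarith
      calc (M + c)/c = (((M + c)/c)^(ε⁻¹))^ε := by
            rw [← Real.rpow_mul hT0, inv_mul_cancel₀ hε0.ne', Real.rpow_one]
        _ ≤ ((N:ℝ)+1)^ε := Real.rpow_le_rpow (Real.rpow_nonneg hT0 _) hle hε0.le
    have : M + c ≤ c * ((N:ℝ)+1)^ε := by
      rw [← div_le_iff₀' hc0] 
      exact hTN
    linarith [hub N]
  · -- 1 ≤ s implies finiteness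
    intro hs1'
    set Mx : ℝ := max (2*(q:ℝ) - s) 0 with hMx
    have hbound : ∀ n : ℕ, F n ≤ ENNReal.ofReal ((2:ℝ)^(q+1)) := by
      intro n
      have hu0 : (0:ℝ) < (n:ℝ) + 1 := by positivity
      have hu1 : (1:ℝ) ≤ (n:ℝ) + 1 := by linarith [Nat.cast_nonneg (α := ℝ) n]
      -- partial sum upper bound
      have hA : ∑ k ∈ Finset.range (n + 1),
          ENNReal.ofReal
            (((k : ℝ) + 1) ^ q * ((k : ℝ) + 2) ^ q * ((k : ℝ) + 1) ^ (-s)) ≤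
          ENNReal.ofReal (((n:ℝ)+1) * ((2:ℝ)^q * ((n:ℝ)+1)^Mx)) := by
        have hper : ∀ k ∈ Finset.range (n+1),
            ((k : ℝ) + 1) ^ q * ((k : ℝ) + 2) ^ q * ((k : ℝ) + 1) ^ (-s) ≤
              (2:ℝ)^q * ((n:ℝ)+1)^Mx := by
          intro k hk
          simp only [Finset.mem_range] at hk
          have hk1 : ((k:ℝ)+1) ≤ (n:ℝ)+1 := by
            have : (k:ℝ) ≤ (n:ℝ) := by exact_mod_cast Nat.lt_succ_iff.mp hk
            linarith
          have hkpos : (0:ℝ) < (k:ℝ) + 1 := by positivity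
          have hk1' : (1:ℝ) ≤ (k:ℝ) + 1 := by linarith [Nat.cast_nonneg (α := ℝ) k]
          calc ((k : ℝ) + 1) ^ q * ((k : ℝ) + 2) ^ q * ((k : ℝ) + 1) ^ (-s)
              ≤ ((k : ℝ) + 1) ^ q * (2*((k:ℝ)+1)) ^ q * ((k : ℝ) + 1) ^ (-s) := by
                have h2 : ((k:ℝ)+2)^q ≤ (2*((k:ℝ)+1))^q :=
                  pow_le_pow_left₀ (by positivity) (by linarith) q
                have h3 : (0:ℝ) ≤ ((k:ℝ)+1)^(-s) := Real.rpow_nonneg hkpos.le _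
                have h4 : (0:ℝ) ≤ ((k:ℝ)+1)^q := by positivity
                nlinarith [mul_le_mul_of_nonneg_left h2 h4]
            _ = (2:ℝ)^q * (((k:ℝ)+1)^(2*q:ℕ) * ((k:ℝ)+1)^(-s)) := by
                rw [mul_pow]
                rw [show 2*q = q + q by omega, pow_add]
                ring
            _ = (2:ℝ)^q * ((k:ℝ)+1)^(2*(q:ℝ)-s) := by
                rw [← Real.rpow_natCast ((k:ℝ)+1) (2*q), ← Real.rpow_add hkpos]
                congr 2
                push_cast
                ring
            _ ≤ (2:ℝ)^q * ((n:ℝ)+1)^Mx := by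
                have h5 : ((k:ℝ)+1)^(2*(q:ℝ)-s) ≤ ((k:ℝ)+1)^Mx :=
                  Real.rpow_le_rpow_of_exponent_le hk1' (le_max_left _ _)
                have h6 : ((k:ℝ)+1)^Mx ≤ ((n:ℝ)+1)^Mx :=
                  Real.rpow_le_rpow hkpos.le hk1 (le_max_right _ _)
                have h7 : (0:ℝ) ≤ (2:ℝ)^q := by positivity
                nlinarith
        rw [← ENNReal.ofReal_sum_of_nonneg (fun i _ => by positivity)]
        apply ENNReal.ofReal_le_ofReal
        refine le_trans (Finset.sum_le_card_nsmul _ _ _ hper) ?_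
        rw [Finset.card_range, nsmul_eq_mul]
        push_cast
        exact le_rfl
      -- tail sum upper bound
      have hB : (∑' k : ℕ,
          ENNReal.ofReal
            (((n : ℝ) + (k : ℝ) + 1) ^ (-s) /
              (((n : ℝ) + (k : ℝ) + 1) ^ q * ((n : ℝ) + (k : ℝ) + 2) ^ q))) ≤
          ENNReal.ofReal (2 * ((n:ℝ)+1)^(1-(s+2*(q:ℝ)))) := by
        have hterm : ∀ k : ℕ,
            ENNReal.ofReal
              (((n : ℝ) + (k : ℝ) + 1) ^ (-s) /
                (((n : ℝ) + (k : ℝ) + 1) ^ q * ((n : ℝ) + (k : ℝ) + 2) ^ q)) ≤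
              ENNReal.ofReal (((n:ℝ) + (k:ℝ) + 1) ^ (-(s+2*(q:ℝ)))) := by
          intro k
          apply ENNReal.ofReal_le_ofReal
          have hX : (0:ℝ) < (n:ℝ) + (k:ℝ) + 1 := by positivity
          have e : ((n:ℝ) + (k:ℝ) + 1)^(-(s+2*(q:ℝ))) =
              ((n:ℝ) + (k:ℝ) + 1)^(-s) / ((n:ℝ) + (k:ℝ) + 1)^(2*q:ℕ) := by
            rw [← Real.rpow_natCast ((n:ℝ) + (k:ℝ) + 1) (2*q), ← Real.rpow_sub hX]
            congr 1
            push_cast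
            ring
          rw [e]
          have hden : ((n:ℝ) + (k:ℝ) + 1)^(2*q:ℕ) ≤
              ((n : ℝ) + (k : ℝ) + 1) ^ q * ((n : ℝ) + (k : ℝ) + 2) ^ q := by
            have h1 : ((n:ℝ) + (k:ℝ) + 1) ^ q ≤ ((n:ℝ) + (k:ℝ) + 2) ^ q :=
              pow_le_pow_left₀ (by positivity) (by linarith) q
            calc ((n:ℝ) + (k:ℝ) + 1)^(2*q:ℕ)
                = ((n:ℝ) + (k:ℝ) + 1)^q * ((n:ℝ) + (k:ℝ) + 1)^q := by
                  rw [← pow_add]; congr 1; omega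
              _ ≤ _ := by
                  have h4 : (0:ℝ) ≤ ((n:ℝ)+(k:ℝ)+1)^q := by positivity
                  nlinarith
          exact div_le_div₀ (Real.rpow_nonneg hX.le _) le_rfl (by positivity) hden
        calc (∑' k : ℕ,
            ENNReal.ofReal
              (((n : ℝ) + (k : ℝ) + 1) ^ (-s) /
                (((n : ℝ) + (k : ℝ) + 1) ^ q * ((n : ℝ) + (k : ℝ) + 2) ^ q)))
            ≤ ∑' k : ℕ, ENNReal.ofReal (((n:ℝ) + (k:ℝ) + 1) ^ (-(s+2*(q:ℝ)))) :=
              ENNReal.tsum_le_tsum hterm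
          _ ≤ ENNReal.ofReal (2 * ((n:ℝ)+1)^(1-(s+2*(q:ℝ)))) :=
              tail_sum_le (by linarith) n
      -- multiply the bounds
      have hE : 1 + Mx + (1-(s+2*(q:ℝ))) ≤ 0 := by
        rcases le_total s (2*(q:ℝ)) with h | h
        · rw [hMx, max_eq_left (by linarith)]
          linarith
        · rw [hMx, max_eq_right (by linarith)]
          linarith
      have hfinal : (((n:ℝ)+1) * ((2:ℝ)^q * ((n:ℝ)+1)^Mx)) *
          (2 * ((n:ℝ)+1)^(1-(s+2*(q:ℝ)))) ≤ (2:ℝ)^(q+1) := by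
        have e1 : ((n:ℝ)+1) * ((n:ℝ)+1)^Mx = ((n:ℝ)+1)^(Mx+1) := by
          rw [Real.rpow_add_one hu0.ne']
          ring
        have hle1 : ((n:ℝ)+1)^(Mx+1) * ((n:ℝ)+1)^(1-(s+2*(q:ℝ))) ≤ 1 := by
          rw [← Real.rpow_add hu0]
          apply Real.rpow_le_one_of_one_le_of_nonpos hu1
          linarith
        calc (((n:ℝ)+1) * ((2:ℝ)^q * ((n:ℝ)+1)^Mx)) * (2 * ((n:ℝ)+1)^(1-(s+2*(q:ℝ))))
            = (2:ℝ)^(q+1) * ((((n:ℝ)+1) * ((n:ℝ)+1)^Mx) * ((n:ℝ)+1)^(1-(s+2*(q:ℝ)))) := by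
              rw [pow_succ]
              ring
          _ = (2:ℝ)^(q+1) * (((n:ℝ)+1)^(Mx+1) * ((n:ℝ)+1)^(1-(s+2*(q:ℝ)))) := by rw [e1]
          _ ≤ (2:ℝ)^(q+1) * 1 := by
              apply mul_le_mul_of_nonneg_left hle1 (by positivity)
          _ = (2:ℝ)^(q+1) := mul_one _
      simp only [hF]
      calc (∑ k ∈ Finset.range (n + 1),
            ENNReal.ofReal
              (((k : ℝ) + 1) ^ q * ((k : ℝ) + 2) ^ q * ((k : ℝ) + 1) ^ (-s))) *
          ∑' k : ℕ,
            ENNReal.ofReal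
              (((n : ℝ) + (k : ℝ) + 1) ^ (-s) /
                (((n : ℝ) + (k : ℝ) + 1) ^ q * ((n : ℝ) + (k : ℝ) + 2) ^ q))
          ≤ ENNReal.ofReal (((n:ℝ)+1) * ((2:ℝ)^q * ((n:ℝ)+1)^Mx)) *
            ENNReal.ofReal (2 * ((n:ℝ)+1)^(1-(s+2*(q:ℝ)))) := mul_le_mul' hA hB
        _ = ENNReal.ofReal ((((n:ℝ)+1) * ((2:ℝ)^q * ((n:ℝ)+1)^Mx)) *
            (2 * ((n:ℝ)+1)^(1-(s+2*(q:ℝ))))) := by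
            rw [← ENNReal.ofReal_mul (by positivity)]
        _ ≤ ENNReal.ofReal ((2:ℝ)^(q+1)) := ENNReal.ofReal_le_ofReal hfinal
    exact lt_of_le_of_lt (iSup_le hbound) ENNReal.ofReal_lt_top
end
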